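/- arXiv:1110.6585 — 4 statements merged into one kernel-verified Lean document; each statement's English description precedes it below -/
import Mathlib

section
/- Let Γ be an abelian group, E a Γ-graded division ring, and S = Mₙ(E) with the unshifted grading. Then the commutator subgroup [S_h*, S_h*] is generated by [S_h*, S₀*] together with the scalar matrices [c,c']·𝕀ₙ for c, c' ∈ E_h*; that is, [S_h*,S_h*] = ⟨{[c,c']·𝕀ₙ : c,c' ∈ E_h*}⟩ · [S_h*,S₀*]. -/
set_option maxHeartbeats 1000000

open scoped commutatorElement

/-- The degree-`lam` homogeneous component of the matrix ring over a `Γ`-graded ring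
`E`; with `δ = 0` this is the unshifted grading, `Mₙ(E)_lam = Mₙ(E_lam)`. -/
def MatrixGrade {Γ E : Type*} [AddCommGroup Γ] [Ring E] (𝒜 : Γ → AddSubgroup E)
    {ι : Type*} (δ : ι → Γ) (lam : Γ) : Set (Matrix ι ι E) :=
  {A | ∀ i j, A i j ∈ 𝒜 (lam + δ j - δ i)}

section Helpers

variable {Γ E : Type*} [AddCommGroup Γ] [DecidableEq Γ] [Ring E]
  (𝒜 : Γ → AddSubgroup E) [GradedRing 𝒜]

private lemma decompose_mul_left' {lam : Γ} {a : E} (ha : a ∈ 𝒜 lam) (b : E) :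
    (DirectSum.decompose 𝒜 (a * b) 0 : E)
      = a * (DirectSum.decompose 𝒜 b (-lam) : E) := by
  induction b using DirectSum.Decomposition.inductionOn 𝒜 with
  | zero => simp
  | @homogeneous i m =>
    rcases eq_or_ne i (-lam) with h | h
    · subst h
      have hm : a * (m : E) ∈ 𝒜 0 := by
        simpa using SetLike.mul_mem_graded ha m.2
      rw [DirectSum.decompose_of_mem_same 𝒜 hm,
        DirectSum.decompose_of_mem_same 𝒜 m.2]
    · have hne : lam + i ≠ 0 := fun h0 => h (eq_neg_of_add_eq_zero_right h0)
      rw [DirectSum.decompose_of_mem_ne 𝒜 (SetLike.mul_mem_graded ha m.2) hne,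
        DirectSum.decompose_of_mem_ne 𝒜 m.2 h, mul_zero]
  | add x y hx hy =>
    rw [mul_add, DirectSum.decompose_add, DirectSum.add_apply, AddSubgroup.coe_add,
      hx, hy, DirectSum.decompose_add, DirectSum.add_apply, AddSubgroup.coe_add, mul_add]

/-- inverse of a homogeneous unit is homogeneous of opposite degree. -/
private lemma unit_inv_mem_grade {lam : Γ} (x : Eˣ) (hx : (x : E) ∈ 𝒜 lam) :
    ((x⁻¹ : Eˣ) : E) ∈ 𝒜 (-lam) := by
  set y : E := (DirectSum.decompose 𝒜 ((x⁻¹ : Eˣ) : E) (-lam) : E) with hy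
  have h1 : (x : E) * y = 1 := by
    rw [hy, ← decompose_mul_left' 𝒜 hx, Units.mul_inv]
    exact DirectSum.decompose_of_mem_same 𝒜 (SetLike.one_mem_graded 𝒜)
  have : ((x⁻¹ : Eˣ) : E) = y := by
    calc ((x⁻¹ : Eˣ) : E) = (x⁻¹ : Eˣ) * ((x : E) * y) := by rw [h1, mul_one]
    _ = ((x⁻¹ : Eˣ) * (x : E)) * y := by rw [mul_assoc]
    _ = y := by rw [Units.inv_mul, one_mul]
  rw [this, hy]; exact SetLike.coe_mem _

variable {n : ℕ}

private lemma matrixGrade_mul {α β : Γ} {A B : Matrix (Fin n) (Fin n) E}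
    (hA : A ∈ MatrixGrade 𝒜 (fun _ : Fin n => (0 : Γ)) α)
    (hB : B ∈ MatrixGrade 𝒜 (fun _ : Fin n => (0 : Γ)) β) :
    A * B ∈ MatrixGrade 𝒜 (fun _ : Fin n => (0 : Γ)) (α + β) := by
  simp only [MatrixGrade, Set.mem_setOf_eq, add_zero, sub_zero] at *
  intro i j
  rw [Matrix.mul_apply]
  exact sum_mem fun k _ => SetLike.mul_mem_graded (hA i k) (hB k j)

private lemma matrix_inv_grade {lam : Γ} (A : (Matrix (Fin n) (Fin n) E)ˣ)
    (h : A.val ∈ MatrixGrade 𝒜 (fun _ : Fin n => (0 : Γ)) lam) :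
    A⁻¹.val ∈ MatrixGrade 𝒜 (fun _ : Fin n => (0 : Γ)) (-lam) := by
  simp only [MatrixGrade, Set.mem_setOf_eq, add_zero, sub_zero] at *
  set B : Matrix (Fin n) (Fin n) E :=
    Matrix.of fun i j => (DirectSum.decompose 𝒜 (A⁻¹.val i j) (-lam) : E) with hB
  have hmul : A.val * B = 1 := by
    ext i j
    rw [Matrix.mul_apply]
    have : ∀ k, A.val i k * B k j
        = (DirectSum.decompose 𝒜 (A.val i k * A⁻¹.val k j) 0 : E) := fun k =>
      (decompose_mul_left' 𝒜 (h i k) _).symm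
    calc (∑ k, A.val i k * B k j)
        = ∑ k, (DirectSum.decompose 𝒜 (A.val i k * A⁻¹.val k j) 0 : E) := by
          simp only [this]
      _ = (DirectSum.decompose 𝒜 (∑ k, A.val i k * A⁻¹.val k j) 0 : E) := by
          rw [DirectSum.decompose_sum, DFinsupp.finset_sum_apply,
            AddSubmonoidClass.coe_finset_sum]
      _ = (DirectSum.decompose 𝒜 ((A.val * A⁻¹.val) i j) 0 : E) := by
          rw [Matrix.mul_apply]
      _ = (1 : Matrix (Fin n) (Fin n) E) i j := by
          rw [A.mul_inv]
          rcases eq_or_ne i j with rfl | hij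
          · simp only [Matrix.one_apply_eq]
            exact DirectSum.decompose_of_mem_same 𝒜 (SetLike.one_mem_graded 𝒜)
          · simp [Matrix.one_apply_ne hij]
  have hBeq : A⁻¹.val = B := by
    calc A⁻¹.val = A⁻¹.val * (A.val * B) := by rw [hmul, mul_one]
    _ = (A⁻¹.val * A.val) * B := by rw [mul_assoc]
    _ = B := by rw [Units.inv_mul, one_mul]
  intro i j
  rw [hBeq]
  exact SetLike.coe_mem _

private lemma scalar_smul_one (c : E) :
    (Matrix.scalar (Fin n)) c = c • (1 : Matrix (Fin n) (Fin n) E) := by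
  ext i j
  rcases eq_or_ne i j with rfl | hij
  · simp [Matrix.scalar_apply, Matrix.one_apply_eq]
  · simp [Matrix.scalar_apply, Matrix.diagonal_apply_ne _ hij, Matrix.one_apply_ne hij]

end Helpers

/-- let `E` be a `Γ`-graded division ring and `S = Mₙ(E)` with the
unshifted grading.  Then `[S_h*, S_h*]` is generated by `[S_h*, S₀*]` together with the
scalar matrices `[c, c'] • 𝕀ₙ` for `c, c' ∈ E_h*`. -/
theorem commutator_of_homogeneous_units {Γ E : Type*} [AddCommGroup Γ]
    [DecidableEq Γ] [Ring E] [Nontrivial E] (𝒜 : Γ → AddSubgroup E) [GradedRing 𝒜]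
    (hdiv : ∀ (γ : Γ) (x : E), x ∈ 𝒜 γ → x ≠ 0 → IsUnit x)
    {n : ℕ}
    -- `S_h*`, the group of homogeneous units of `S = Mₙ(E)` (unshifted grading)
    (Sh : Subgroup (Matrix (Fin n) (Fin n) E)ˣ)
    (hSh : ∀ A : (Matrix (Fin n) (Fin n) E)ˣ,
      A ∈ Sh ↔ ∃ lam, A.val ∈ MatrixGrade 𝒜 (fun _ : Fin n => (0 : Γ)) lam)
    -- `S₀*`, the group of units of the degree-zero component `S₀ = Mₙ(E₀)`
    (S0u : Subgroup (Matrix (Fin n) (Fin n) E)ˣ)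
    (hS0u : ∀ A : (Matrix (Fin n) (Fin n) E)ˣ, A ∈ S0u ↔
      (A.val ∈ MatrixGrade 𝒜 (fun _ : Fin n => (0 : Γ)) 0 ∧
       A⁻¹.val ∈ MatrixGrade 𝒜 (fun _ : Fin n => (0 : Γ)) 0)) :
    ⁅Sh, Sh⁆ = Subgroup.closure
      ({m : (Matrix (Fin n) (Fin n) E)ˣ | ∃ c c' : Eˣ,
          (∃ γ : Γ, c.val ∈ 𝒜 γ) ∧ (∃ γ : Γ, c'.val ∈ 𝒜 γ) ∧
          m.val = (⁅c, c'⁆ : Eˣ).val • (1 : Matrix (Fin n) (Fin n) E)} ∪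
        (⁅Sh, S0u⁆ : Subgroup (Matrix (Fin n) (Fin n) E)ˣ)) := by
  -- the scalar embedding
  set φ : Eˣ →* (Matrix (Fin n) (Fin n) E)ˣ :=
    Units.map ((Matrix.scalar (Fin n)) : E →+* Matrix (Fin n) (Fin n) E).toMonoidHom with hφ
  have hφval : ∀ c : Eˣ, (φ c).val = (c : E) • (1 : Matrix (Fin n) (Fin n) E) := by
    intro c
    rw [hφ]
    exact scalar_smul_one (c : E)
  -- φ of a homogeneous unit lies in Sh
  have hφSh : ∀ (c : Eˣ) (γ : Γ), (c : E) ∈ 𝒜 γ → φ c ∈ Sh := by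
    intro c γ hc
    rw [hSh]
    refine ⟨γ, ?_⟩
    intro i j
    rw [hφval]
    rcases eq_or_ne i j with rfl | hij
    · simpa [Matrix.smul_apply, Matrix.one_apply_eq] using hc
    · rw [Matrix.smul_apply, Matrix.one_apply_ne hij, smul_zero]
      exact zero_mem _
  -- S0u ≤ Sh
  have hle : S0u ≤ Sh := by
    intro A hA
    rw [hS0u] at hA
    exact (hSh A).mpr ⟨0, hA.1⟩
  -- S0u is normalized by Sh
  have hnorm : ∀ g ∈ Sh, ∀ k ∈ S0u, g * k * g⁻¹ ∈ S0u := by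
    intro g hg k hk
    obtain ⟨lam, hglam⟩ := (hSh g).mp hg
    obtain ⟨hk0, hk0'⟩ := (hS0u k).mp hk
    have hginv := matrix_inv_grade 𝒜 g hglam
    rw [hS0u]
    constructor
    · rw [Units.val_mul, Units.val_mul]
      have hmem := matrixGrade_mul 𝒜 (matrixGrade_mul 𝒜 hglam hk0) hginv
      rwa [show lam + 0 + -lam = 0 by abel] at hmem
    · have hval : (g * k * g⁻¹)⁻¹ = g * k⁻¹ * g⁻¹ := by group
      rw [hval, Units.val_mul, Units.val_mul]
      have hmem := matrixGrade_mul 𝒜 (matrixGrade_mul 𝒜 hglam hk0') hginv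
      rwa [show lam + 0 + -lam = 0 by abel] at hmem
  apply le_antisymm
  · -- hard direction
    rw [Subgroup.commutator_le]
    intro a ha b hb
    rcases Nat.eq_zero_or_pos n with hn0 | hn
    · subst hn0
      have : ⁅a, b⁆ = 1 := Units.ext (Subsingleton.elim _ _)
      rw [this]; exact one_mem _
    -- decompose a homogeneous unit as scalar * degree-zero unit
    have decomp : ∀ g ∈ Sh, ∃ (d : Eˣ) (γ : Γ), (d : E) ∈ 𝒜 γ ∧
        (φ d)⁻¹ * g ∈ S0u := by
      intro g hg
      obtain ⟨lam, hglam⟩ := (hSh g).mp hg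
      have hne : ∃ i j, g.val i j ≠ 0 := by
        by_contra hc
        push_neg at hc
        have hg0 : g.val = 0 := by
          ext i j; simpa using hc i j
        have : (1 : Matrix (Fin n) (Fin n) E) = 0 := by
          rw [← g.mul_inv, hg0, zero_mul]
        have h10 : (1 : Matrix (Fin n) (Fin n) E) ⟨0, hn⟩ ⟨0, hn⟩ = 0 := by rw [this]; rfl
        rw [Matrix.one_apply_eq] at h10
        exact one_ne_zero h10
      obtain ⟨i, j, hij⟩ := hne
      have hdmem : g.val i j ∈ 𝒜 lam := by
        have h := hglam i j; simp only [add_zero, sub_zero] at h; exact h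
      obtain ⟨d, hd⟩ := hdiv lam (g.val i j) hdmem hij
      refine ⟨d, lam, hd ▸ hdmem, ?_⟩
      have hdinv : ((d⁻¹ : Eˣ) : E) ∈ 𝒜 (-lam) := unit_inv_mem_grade 𝒜 d (hd ▸ hdmem)
      rw [hS0u]
      constructor
      · have hval : ((φ d)⁻¹ * g).val = ((d⁻¹ : Eˣ) : E) • (1 : Matrix (Fin n) (Fin n) E) * g.val := by
          rw [Units.val_mul, ← map_inv, hφval]
        rw [hval]
        intro i' j'
        have : (((d⁻¹ : Eˣ) : E) • (1 : Matrix (Fin n) (Fin n) E) * g.val) i' j'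
            = ((d⁻¹ : Eˣ) : E) * g.val i' j' := by
          rw [← scalar_smul_one, Matrix.scalar_apply, Matrix.diagonal_mul]
        rw [this]
        have hgm : g.val i' j' ∈ 𝒜 lam := by
          have h := hglam i' j'; simp only [add_zero, sub_zero] at h; exact h
        have h2 := SetLike.mul_mem_graded hdinv hgm
        simp only [neg_add_cancel] at h2
        simp only [add_zero, sub_zero]
        exact h2
      · have hval : (((φ d)⁻¹ * g)⁻¹).val = g⁻¹.val * ((d : Eˣ) : E) • (1 : Matrix (Fin n) (Fin n) E) := by
          rw [mul_inv_rev, inv_inv, Units.val_mul, hφval]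
        rw [hval]
        intro i' j'
        have : (g⁻¹.val * ((d : Eˣ) : E) • (1 : Matrix (Fin n) (Fin n) E)) i' j'
            = g⁻¹.val i' j' * (d : E) := by
          rw [← scalar_smul_one, Matrix.scalar_apply, Matrix.mul_diagonal]
        rw [this]
        have hgm : g⁻¹.val i' j' ∈ 𝒜 (-lam) := by
          have h := matrix_inv_grade 𝒜 g hglam i' j'
          simp only [add_zero, sub_zero] at h; exact h
        have h2 := SetLike.mul_mem_graded hgm (hd ▸ hdmem)
        simp only [neg_add_cancel] at h2
        simp only [add_zero, sub_zero]
        exact h2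
    obtain ⟨d, γa, hdγ, huS0⟩ := decomp a ha
    obtain ⟨e, γb, heγ, hvS0⟩ := decomp b hb
    set s := φ d with hs
    set t := φ e with ht
    set u := s⁻¹ * a with hu
    set v := t⁻¹ * b with hv
    have has : a = s * u := by rw [hu]; group
    have hbt : b = t * v := by rw [hv]; group
    have hsSh : s ∈ Sh := hφSh d γa hdγ
    have htSh : t ∈ Sh := hφSh e γb heγ
    have key : ⁅a, b⁆ = ⁅s * u * s⁻¹, s * b * s⁻¹⁆ * (⁅s, t⁆ * ⁅t * s * t⁻¹, t * v * t⁻¹⁆) := by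
      rw [has, hbt]
      simp only [commutatorElement_def]
      group
    rw [key]
    refine mul_mem ?_ (mul_mem ?_ ?_)
    · -- ⁅s u s⁻¹, s b s⁻¹⁆ with s u s⁻¹ ∈ S0u, s b s⁻¹ ∈ Sh
      have h1 : s * u * s⁻¹ ∈ S0u := hnorm s hsSh u huS0
      have h2 : s * b * s⁻¹ ∈ Sh := mul_mem (mul_mem hsSh hb) (inv_mem hsSh)
      have : ⁅s * u * s⁻¹, s * b * s⁻¹⁆ = ⁅s * b * s⁻¹, s * u * s⁻¹⁆⁻¹ := by
        rw [commutatorElement_inv]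
      rw [this]
      exact inv_mem (Subgroup.subset_closure (Or.inr (Subgroup.commutator_mem_commutator h2 h1)))
    · -- scalar commutator
      apply Subgroup.subset_closure
      left
      refine ⟨d, e, ⟨γa, hdγ⟩, ⟨γb, heγ⟩, ?_⟩
      have : ⁅s, t⁆ = φ ⁅d, e⁆ := by rw [hs, ht, map_commutatorElement]
      rw [this, hφval]
    · apply Subgroup.subset_closure
      right
      have h1 : t * s * t⁻¹ ∈ Sh := mul_mem (mul_mem htSh hsSh) (inv_mem htSh)
      have h2 : t * v * t⁻¹ ∈ S0u := hnorm t htSh v hvS0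
      exact Subgroup.commutator_mem_commutator h1 h2
  · -- easy direction
    rw [Subgroup.closure_le]
    rintro m (⟨c, c', ⟨γ, hc⟩, ⟨γ', hc'⟩, hm⟩ | hm)
    · have hmeq : m = ⁅φ c, φ c'⁆ := by
        apply Units.ext
        rw [← map_commutatorElement, hm, hφval]
      rw [hmeq]
      exact Subgroup.commutator_mem_commutator (hφSh c γ hc) (hφSh c' γ' hc')
    · exact Subgroup.commutator_mono le_rfl hle hm
end

section
/- Let Γ be a torsion-free abelian group and E a Γ-graded division algebra with center T, and let Λ = (Γ_E/Γ_T) ∧ (Γ_E/Γ_T) be the exterior square (over ℤ) of the finite abelian group Γ_E/Γ_T. Then there is a surjective group homomorphism from Λ onto [E*,E*]/[E*,E₀*] (in particular this quotient is an abelian group); consequently, for every n ≥ 1, the quotient [E*,E*]/([E*,E*]ⁿ·[E*,E₀*]) is a homomorphic image of Λ/nΛ. -/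
set_option maxHeartbeats 1000000
set_option synthInstance.maxHeartbeats 1000000

open scoped commutatorElement


open Polynomial in
lemma exists_int_functional {A : Type*} [AddCommGroup A] [Module ℤ A]
    [Module.Free ℤ A] [Module.Finite ℤ A] (D : Finset A) (hD : (0:A) ∉ D) :
    ∃ v : A →ₗ[ℤ] ℤ, ∀ d ∈ D, v d ≠ 0 := by
  classical
  let ι := Module.Free.ChooseBasisIndex ℤ A
  let b : Module.Basis ι ℤ A := Module.Free.chooseBasis ℤ A
  let e : ι ≃ Fin (Fintype.card ι) := Fintype.equivFin ι
  let P : A → Polynomial ℤ := fun d => ∑ i : ι, C (b.repr d i) * X ^ (e i : ℕ)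
  have hPcoeff : ∀ d (i : ι), (P d).coeff (e i) = b.repr d i := by
    intro d i
    rw [finset_sum_coeff, Finset.sum_eq_single i]
    · simp
    · intro j _ hji
      have : ((e j : ℕ)) ≠ (e i : ℕ) := by
        simp only [ne_eq, Fin.val_eq_val, EmbeddingLike.apply_eq_iff_eq]
        exact hji
      simp [coeff_X_pow, Ne.symm this]
    · simp
  have hP0 : ∀ d ∈ D, P d ≠ 0 := by
    intro d hd h0
    have hd0 : d ≠ 0 := fun h => hD (h ▸ hd)
    have : b.repr d ≠ 0 := fun h => hd0 (by simpa using congrArg b.repr.symm h)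
    obtain ⟨i, hi⟩ := Finsupp.ne_iff.mp this
    exact hi (by simpa [h0] using (hPcoeff d i).symm)
  obtain ⟨t, ht⟩ := Infinite.exists_notMem_finset
    (D.biUnion fun d => (P d).roots.toFinset)
  refine ⟨(Finsupp.linearCombination ℤ fun i : ι => t ^ (e i : ℕ)).comp
      (b.repr : A →ₗ[ℤ] ι →₀ ℤ), ?_⟩
  intro d hd
  have hvd : (Finsupp.linearCombination ℤ fun i : ι => t ^ (e i : ℕ)) (b.repr d)
      = (P d).eval t := by
    rw [Finsupp.linearCombination_apply, Finsupp.sum_fintype _ _ (by simp)]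
    simp [P, eval_finset_sum]
  rw [LinearMap.comp_apply]
  erw [hvd]
  intro h
  exact ht (Finset.mem_biUnion.2 ⟨d, hd, Multiset.mem_toFinset.2
    ((Polynomial.mem_roots (hP0 d hd)).2 h)⟩)


lemma units_homogeneous {Γ E : Type*} [AddCommGroup Γ] [DecidableEq Γ] [Ring E] [Nontrivial E]
    (𝒜 : Γ → AddSubgroup E) [GradedRing 𝒜]
    (hdiv : ∀ (γ : Γ) (x : E), x ∈ 𝒜 γ → x ≠ 0 → IsUnit x)
    (htf : ∀ (γ : Γ) (m : ℕ), m ≠ 0 → m • γ = 0 → γ = 0)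
    (u : Eˣ) : ∃ γ : Γ, (u : E) ∈ 𝒜 γ := by
  classical
  haveI : NoZeroSMulDivisors ℤ Γ := by
    refine ⟨fun {n γ} h => ?_⟩
    rcases eq_or_ne n 0 with rfl | hn
    · exact Or.inl rfl
    · refine Or.inr (htf γ n.natAbs (Int.natAbs_ne_zero.2 hn) ?_)
      have : ((n.natAbs : ℤ)) • γ = n.natAbs • γ := natCast_zsmul _ _
      rcases Int.natAbs_eq n with he | he
      · rw [← this, ← he, h]
      · rw [← this, ← neg_neg ((n.natAbs : ℤ)), ← he, neg_zsmul, h, neg_zero]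
  set ra := DirectSum.decompose 𝒜 (u : E) with hra
  set rb := DirectSum.decompose 𝒜 ((u⁻¹ : Eˣ) : E) with hrb
  set Sa := ra.support with hSa
  set Sb := rb.support with hSb
  set F := Sa ∪ Sb with hF
  set A : Submodule ℤ Γ := Submodule.span ℤ (F : Set Γ) with hA
  haveI : Module.Finite ℤ A := Module.Finite.span_of_finite ℤ (F.finite_toSet)
  have hFA : ∀ γ ∈ F, (γ : Γ) ∈ A := fun γ h => Submodule.subset_span h
  -- the separating functional
  set D : Finset A := ((F ×ˢ F).attach.image fun p =>
      (⟨p.1.1 - p.1.2, sub_mem (hFA _ (Finset.mem_product.mp p.2).1)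
        (hFA _ (Finset.mem_product.mp p.2).2)⟩ : A)).filter (· ≠ 0) with hD
  have hD0 : (0 : A) ∉ D := by simp [hD]
  obtain ⟨v, hv⟩ := exists_int_functional D hD0
  set w : Γ → ℤ := fun γ => if h : γ ∈ A then v ⟨γ, h⟩ else 0 with hw
  have hw_add : ∀ {γ δ : Γ}, γ ∈ A → δ ∈ A → w (γ + δ) = w γ + w δ := by
    intro γ δ hγ hδ
    rw [hw]
    simp only [dif_pos (add_mem hγ hδ), dif_pos hγ, dif_pos hδ]
    rw [← map_add]
    rfl
  have hwinj : ∀ γ ∈ F, ∀ δ ∈ F, w γ = w δ → γ = δ := by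
    intro γ hγ δ hδ hwe
    by_contra hne
    have hmem : (⟨γ - δ, sub_mem (hFA γ hγ) (hFA δ hδ)⟩ : A) ∈ D := by
      refine Finset.mem_filter.2 ⟨Finset.mem_image.2
        ⟨⟨(γ, δ), Finset.mem_product.2 ⟨hγ, hδ⟩⟩, Finset.mem_attach _ _, rfl⟩, ?_⟩
      simp only [ne_eq, Submodule.mk_eq_zero]
      exact sub_ne_zero.2 hne
    refine hv _ hmem ?_
    have h1 : v ⟨γ - δ, sub_mem (hFA γ hγ) (hFA δ hδ)⟩
        = v ⟨γ, hFA γ hγ⟩ - v ⟨δ, hFA δ hδ⟩ := by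
      rw [← map_sub]; rfl
    have h2 : w γ = v ⟨γ, hFA γ hγ⟩ := by rw [hw]; simp [dif_pos (hFA γ hγ)]
    have h3 : w δ = v ⟨δ, hFA δ hδ⟩ := by rw [hw]; simp [dif_pos (hFA δ hδ)]
    rw [h1, ← h2, ← h3, hwe, sub_self]
  -- supports are nonempty
  have hane : ra ≠ 0 := by
    intro h
    apply Units.ne_zero u
    have := congrArg (DirectSum.decompose 𝒜).symm h
    simpa [hra] using this
  have hbne : rb ≠ 0 := by
    intro h
    apply Units.ne_zero u⁻¹
    have := congrArg (DirectSum.decompose 𝒜).symm h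
    simpa [hrb] using this
  have hSane : Sa.Nonempty := by
    rw [Finset.nonempty_iff_ne_empty]; intro h; exact hane (DFinsupp.support_eq_empty.1 h)
  have hSbne : Sb.Nonempty := by
    rw [Finset.nonempty_iff_ne_empty]; intro h; exact hbne (DFinsupp.support_eq_empty.1 h)
  -- the key extremal argument
  have key : ∀ (w' : Γ → ℤ), (∀ {γ δ : Γ}, γ ∈ A → δ ∈ A → w' (γ + δ) = w' γ + w' δ) →
      (∀ γ ∈ F, ∀ δ ∈ F, w' γ = w' δ → γ = δ) →
      ∀ α ∈ Sa, ∀ β ∈ Sb, (∀ i ∈ Sa, w' i ≤ w' α) → (∀ j ∈ Sb, w' j ≤ w' β) →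
      α + β = 0 := by
    intro w' hadd hinj α hα β hβ hmaxa hmaxb
    by_contra hne
    have h2 : ra * rb = 1 := by
      rw [hra, hrb, ← DirectSum.decompose_mul, Units.mul_inv, DirectSum.decompose_one]
    have h1 : ((ra * rb) (α + β) : E) = 0 := by
      rw [h2, DirectSum.one_def, DirectSum.of_eq_of_ne _ _ _ hne]
      rfl
    rw [DirectSum.coe_mul_apply 𝒜] at h1
    have h3 : ∑ ij ∈ (Sa ×ˢ Sb).filter (fun ij : Γ × Γ => ij.1 + ij.2 = α + β),
        (ra ij.1 * rb ij.2 : E)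
        = (ra α * rb β : E) := by
      refine Finset.sum_eq_single_of_mem (α, β)
        (Finset.mem_filter.2 ⟨Finset.mem_product.2 ⟨hα, hβ⟩, rfl⟩) ?_
      rintro ⟨i, j⟩ hij hne'
      exfalso
      obtain ⟨hij', hsum⟩ := Finset.mem_filter.mp hij
      obtain ⟨hi, hj⟩ := Finset.mem_product.mp hij'
      have e1 : w' i + w' j = w' α + w' β := by
        rw [← hadd (hFA i (Finset.mem_union_left _ hi)) (hFA j (Finset.mem_union_right _ hj)),
          ← hadd (hFA α (Finset.mem_union_left _ hα)) (hFA β (Finset.mem_union_right _ hβ)), hsum]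
      have e2 : w' i = w' α := by
        have := hmaxa i hi
        have := hmaxb j hj
        omega
      have e3 : w' j = w' β := by
        have := hmaxa i hi
        have := hmaxb j hj
        omega
      have ei : i = α := hinj i (Finset.mem_union_left _ hi) α (Finset.mem_union_left _ hα) e2
      have ej : j = β := hinj j (Finset.mem_union_right _ hj) β (Finset.mem_union_right _ hβ) e3
      exact hne' (by rw [ei, ej])
    rw [h3] at h1
    have hca : (ra α : E) ≠ 0 := by
      intro h
      exact DFinsupp.mem_support_iff.mp hα (by exact_mod_cast ZeroMemClass.coe_eq_zero.mp h)
    have hcb : (rb β : E) ≠ 0 := by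
      intro h
      exact DFinsupp.mem_support_iff.mp hβ (by exact_mod_cast ZeroMemClass.coe_eq_zero.mp h)
    have hun : IsUnit (ra α : E) := hdiv α _ (SetLike.coe_mem _) hca
    exact hcb (hun.mul_right_eq_zero.mp h1)
  obtain ⟨α₁, hα₁, hmaxa⟩ := Finset.exists_max_image Sa w hSane
  obtain ⟨β₁, hβ₁, hmaxb⟩ := Finset.exists_max_image Sb w hSbne
  obtain ⟨α₀, hα₀, hmina⟩ := Finset.exists_min_image Sa w hSane
  obtain ⟨β₀, hβ₀, hminb⟩ := Finset.exists_min_image Sb w hSbne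
  have hk1 : α₁ + β₁ = 0 := key w hw_add hwinj α₁ hα₁ β₁ hβ₁ hmaxa hmaxb
  have hk0 : α₀ + β₀ = 0 := by
    refine key (fun γ => -(w γ)) (fun {γ δ} hγ hδ => by show -w (γ + δ) = -w γ + -w δ; rw [hw_add hγ hδ]; ring)
      (fun γ hγ δ hδ h => hwinj γ hγ δ hδ (neg_inj.mp h)) α₀ hα₀ β₀ hβ₀
      (fun i hi => neg_le_neg (hmina i hi)) (fun j hj => neg_le_neg (hminb j hj))
  have hs : w α₁ + w β₁ = w α₀ + w β₀ := by
    have e1 := hw_add (hFA α₁ (Finset.mem_union_left _ hα₁)) (hFA β₁ (Finset.mem_union_right _ hβ₁))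
    have e0 := hw_add (hFA α₀ (Finset.mem_union_left _ hα₀)) (hFA β₀ (Finset.mem_union_right _ hβ₀))
    rw [hk1] at e1
    rw [hk0] at e0
    rw [← e1, ← e0]
  have hq : w α₀ = w α₁ := by
    have h1 := hmina α₁ hα₁
    have h2 := hminb β₁ hβ₁
    omega
  have hall : ∀ γ ∈ Sa, γ = α₁ := by
    intro γ hγ
    refine hwinj γ (Finset.mem_union_left _ hγ) α₁ (Finset.mem_union_left _ hα₁) ?_
    have h1 := hmaxa γ hγ
    have h2 := hmina γ hγ
    omega
  have hSaeq : Sa = {α₁} := Finset.eq_singleton_iff_unique_mem.2 ⟨hα₁, hall⟩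
  have : (u : E) = (ra α₁ : E) := by
    conv_lhs => rw [← DirectSum.sum_support_decompose 𝒜 ((u : E))]
    rw [← hra, ← hSa, hSaeq, Finset.sum_singleton]
  exact ⟨α₁, this ▸ SetLike.coe_mem _⟩


/-- Build an alternating 2-map from a bilinear map vanishing on the diagonal. -/
def auxBilinAlt {R M N : Type*} [CommRing R] [AddCommGroup M] [AddCommGroup N]
    [Module R M] [Module R N] (B : M →ₗ[R] M →ₗ[R] N) (hB : ∀ x, B x x = 0) :
    M [⋀^Fin 2]→ₗ[R] N where
  toFun v := B (v 0) (v 1)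
  map_update_add' := by
    intro inst m i x y
    have hinst : inst = instDecidableEqFin 2 := Subsingleton.elim _ _
    subst hinst
    fin_cases i <;>
      simp [Function.update_self, Function.update_of_ne, (by decide : (1 : Fin 2) ≠ 0),
        (by decide : (0 : Fin 2) ≠ 1)]
  map_update_smul' := by
    intro inst m i c x
    have hinst : inst = instDecidableEqFin 2 := Subsingleton.elim _ _
    subst hinst
    fin_cases i <;>
      simp [Function.update_self, Function.update_of_ne, (by decide : (1 : Fin 2) ≠ 0),
        (by decide : (0 : Fin 2) ≠ 1)]
  map_eq_zero_of_eq' := by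
    intro v i j hveq hij
    have h01 : v 0 = v 1 := by
      fin_cases i <;> fin_cases j <;>
        first
        | exact absurd rfl hij
        | exact hveq
        | exact hveq.symm
    show B (v 0) (v 1) = 0
    rw [h01]
    exact hB _

/-- A family of alternating maps concentrated in degree 2. -/
def auxAltFamily {R M N : Type*} [CommRing R] [AddCommGroup M] [AddCommGroup N]
    [Module R M] [Module R N] (f : M [⋀^Fin 2]→ₗ[R] N) : ∀ i : ℕ, M [⋀^Fin i]→ₗ[R] N
  | 2 => f
  | 0 => 0
  | 1 => 0
  | (_ + 3) => 0

@[simp] lemma auxAltFamily_two {R M N : Type*} [CommRing R] [AddCommGroup M] [AddCommGroup N]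
    [Module R M] [Module R N] (f : M [⋀^Fin 2]→ₗ[R] N) : auxAltFamily f 2 = f := rfl

/-- let `Γ` be a torsion-free abelian group, `E` a `Γ`-graded
division algebra with center `T = Z(E)`, and `Λ = (Γ_E/Γ_T) ∧ (Γ_E/Γ_T)` the exterior
square over `ℤ` of `Γ_E/Γ_T`.  Then there is a surjective group homomorphism from `Λ`
onto `[E*, E*]/[E*, E₀*]` (in particular this quotient is abelian); consequently, for
every `n ≥ 1`, `[E*, E*]/([E*, E*]ⁿ · [E*, E₀*])` is a homomorphic image of `Λ/nΛ`. -/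
theorem exterior_square_surjects_onto_commutator_quotient {Γ E : Type*}
    [AddCommGroup Γ] [DecidableEq Γ] [Ring E] [Nontrivial E]
    (𝒜 : Γ → AddSubgroup E) [GradedRing 𝒜]
    (hdiv : ∀ (γ : Γ) (x : E), x ∈ 𝒜 γ → x ≠ 0 → IsUnit x)
    -- `Γ` is torsion-free
    (htf : ∀ (γ : Γ) (m : ℕ), m ≠ 0 → m • γ = 0 → γ = 0)
    -- `E` is a graded division *algebra*: finite-dimensional over its center
    (hfin : Module.Finite (Subring.center E) E)
    -- the grade groups `Γ_E` and `Γ_T` (`T = Z(E)`)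
    (GammaE GammaT : AddSubgroup Γ)
    (hGE : ∀ γ : Γ, γ ∈ GammaE ↔ ∃ x : E, x ≠ 0 ∧ x ∈ 𝒜 γ)
    (hGT : ∀ γ : Γ, γ ∈ GammaT ↔ ∃ x : E, x ≠ 0 ∧ x ∈ 𝒜 γ ∧ x ∈ Set.center E)
    (hTE : GammaT ≤ GammaE)
    -- `E₀*`, the group of units of the degree-zero component
    (E0u : Subgroup Eˣ) (hE0u : ∀ u : Eˣ, u ∈ E0u ↔ u.val ∈ 𝒜 (0 : Γ))
    -- `N = [E*, E₀*]`
    (N : Subgroup Eˣ) [N.Normal] (hN : N = ⁅(⊤ : Subgroup Eˣ), E0u⁆) :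
    -- there is a group homomorphism from `Λ` onto `[E*, E*]/[E*, E₀*] ⊆ Eˣ/N`
    (∃ φ : Multiplicative ↥(⋀[ℤ]^2 (↥GammaE ⧸ GammaT.addSubgroupOf GammaE)) →*
        Eˣ ⧸ N,
      Set.range φ = (QuotientGroup.mk : Eˣ → Eˣ ⧸ N) '' (commutator Eˣ : Set Eˣ)) ∧
    -- in particular the quotient `[E*, E*]/[E*, E₀*]` is abelian
    (∀ a b : Eˣ ⧸ N,
      a ∈ (QuotientGroup.mk : Eˣ → Eˣ ⧸ N) '' (commutator Eˣ : Set Eˣ) →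
      b ∈ (QuotientGroup.mk : Eˣ → Eˣ ⧸ N) '' (commutator Eˣ : Set Eˣ) →
      a * b = b * a) ∧
    -- consequently `[E*, E*]/([E*, E*]ⁿ · [E*, E₀*])` is a homomorphic image of `Λ/nΛ`
    (∀ nn : ℕ, 0 < nn → ∀ (Nn : Subgroup Eˣ) [Nn.Normal],
      Nn = Subgroup.closure
          ((fun y : Eˣ => y ^ nn) '' (commutator Eˣ : Set Eˣ)) ⊔ N →
      ∃ ψ : Multiplicative ↥(⋀[ℤ]^2 (↥GammaE ⧸ GammaT.addSubgroupOf GammaE)) →*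
          Eˣ ⧸ Nn,
        Set.range ψ = (QuotientGroup.mk : Eˣ → Eˣ ⧸ Nn) '' (commutator Eˣ : Set Eˣ) ∧
        ∀ x, ψ (Multiplicative.ofAdd (nn • x)) = 1) := by
  classical
  -- every unit is homogeneous
  have hhomog : ∀ u : Eˣ, ∃ γ : Γ, (u : E) ∈ 𝒜 γ := units_homogeneous 𝒜 hdiv htf
  have hdegE : ∀ u : Eˣ, ∃ γ : Γ, (u : E) ∈ 𝒜 γ ∧ γ ∈ GammaE := by
    intro u
    obtain ⟨γ, h⟩ := hhomog u
    exact ⟨γ, h, (hGE γ).2 ⟨u, Units.ne_zero u, h⟩⟩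
  -- the inverse of a homogeneous unit is homogeneous of opposite degree
  have hinv : ∀ (u : Eˣ) (γ : Γ), (u : E) ∈ 𝒜 γ → ((u⁻¹ : Eˣ) : E) ∈ 𝒜 (-γ) := by
    intro u γ h
    obtain ⟨δ, hδ⟩ := hhomog u⁻¹
    have h1 : ((u : E) * ((u⁻¹ : Eˣ) : E)) ∈ 𝒜 (γ + δ) := SetLike.mul_mem_graded h hδ
    rw [Units.mul_inv] at h1
    have h2 : γ + δ = 0 :=
      DirectSum.degree_eq_of_mem_mem 𝒜 h1 (SetLike.one_mem_graded 𝒜) one_ne_zero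
    have h3 : δ = -γ := eq_neg_of_add_eq_zero_right h2
    rwa [h3] at hδ
  -- commutators of homogeneous units have degree zero
  have hcomm0 : ∀ (a b : Eˣ) (γ δ : Γ), (a : E) ∈ 𝒜 γ → (b : E) ∈ 𝒜 δ → ⁅a, b⁆ ∈ E0u := by
    intro a b γ δ ha hb
    rw [hE0u]
    have hval : ((⁅a, b⁆ : Eˣ) : E)
        = (a : E) * (b : E) * ((a⁻¹ : Eˣ) : E) * ((b⁻¹ : Eˣ) : E) := by
      simp [commutatorElement_def, Units.val_mul]
    have m := SetLike.mul_mem_graded (SetLike.mul_mem_graded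
      (SetLike.mul_mem_graded ha hb) (hinv a γ ha)) (hinv b δ hb)
    have he : γ + δ + -γ + -δ = 0 := by abel
    rw [he] at m
    rw [show (⁅a, b⁆ : Eˣ).val = ((⁅a, b⁆ : Eˣ) : E) from rfl, hval]
    exact m
  -- the commutator subgroup consists of degree-zero units
  have hCE0 : commutator Eˣ ≤ E0u := by
    rw [commutator_def, Subgroup.commutator_le]
    intro a _ b _
    obtain ⟨γ, ha, _⟩ := hdegE a
    obtain ⟨δ, hb, _⟩ := hdegE b
    exact hcomm0 a b γ δ ha hb
  have hmemC : ∀ a b : Eˣ, ⁅a, b⁆ ∈ commutator Eˣ := by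
    intro a b
    rw [commutator_def]
    exact Subgroup.commutator_mem_commutator (Subgroup.mem_top a) (Subgroup.mem_top b)
  -- commutators with a degree-zero entry die in the quotient
  have hNmem : ∀ (a b : Eˣ), b ∈ E0u → ⁅a, b⁆ ∈ N := by
    intro a b hb
    rw [hN]
    exact Subgroup.commutator_mem_commutator (Subgroup.mem_top a) hb
  have hNmem' : ∀ (a b : Eˣ), a ∈ E0u → ⁅a, b⁆ ∈ N := by
    intro a b ha
    rw [hN, Subgroup.commutator_comm]
    exact Subgroup.commutator_mem_commutator ha (Subgroup.mem_top b)
  set mkN : Eˣ →* Eˣ ⧸ N := QuotientGroup.mk' N with hmkN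
  have hconj : ∀ (a c : Eˣ), c ∈ E0u → mkN (a * c * a⁻¹) = mkN c := by
    intro a c hc
    have h1 : mkN ⁅a, c⁆ = 1 := (QuotientGroup.eq_one_iff _).2 (hNmem a c hc)
    have h2 : a * c * a⁻¹ = ⁅a, c⁆ * c := by group
    rw [h2, map_mul, h1, one_mul]
  -- choice of a homogeneous unit in each degree of `Γ_E`
  have hex : ∀ γ : ↥GammaE, ∃ u : Eˣ, (u : E) ∈ 𝒜 (γ : Γ) := by
    intro γ
    obtain ⟨x, hx0, hx⟩ := (hGE γ).1 γ.2
    obtain ⟨u, hu⟩ := hdiv γ x hx hx0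
    exact ⟨u, hu ▸ hx⟩
  choose xU hxU using hex
  -- the class of a commutator only depends on the degrees
  have K1L : ∀ (a a' b : Eˣ) (γ : Γ), (a : E) ∈ 𝒜 γ → (a' : E) ∈ 𝒜 γ →
      mkN ⁅a, b⁆ = mkN ⁅a', b⁆ := by
    intro a a' b γ ha ha'
    have he : (a⁻¹ * a' : Eˣ) ∈ E0u := by
      rw [hE0u]
      have h1 := SetLike.mul_mem_graded (hinv a γ ha) ha'
      rw [neg_add_cancel] at h1
      exact h1
    have hid : ⁅a * (a⁻¹ * a'), b⁆ = a * ⁅a⁻¹ * a', b⁆ * a⁻¹ * ⁅a, b⁆ := by group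
    have hae : a * (a⁻¹ * a') = a' := by group
    have h1 : mkN ⁅a⁻¹ * a', b⁆ = 1 := (QuotientGroup.eq_one_iff _).2 (hNmem' _ b he)
    have h2 : mkN ⁅a', b⁆ = mkN a * mkN ⁅a⁻¹ * a', b⁆ * (mkN a)⁻¹ * mkN ⁅a, b⁆ := by
      rw [← hae, hid]
      simp [map_mul]
    rw [h2, h1]
    group
  have K1R : ∀ (a b b' : Eˣ) (δ : Γ), (b : E) ∈ 𝒜 δ → (b' : E) ∈ 𝒜 δ →
      mkN ⁅a, b⁆ = mkN ⁅a, b'⁆ := by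
    intro a b b' δ hb hb'
    have he : (b⁻¹ * b' : Eˣ) ∈ E0u := by
      rw [hE0u]
      have h1 := SetLike.mul_mem_graded (hinv b δ hb) hb'
      rw [neg_add_cancel] at h1
      exact h1
    have hid : ⁅a, b * (b⁻¹ * b')⁆ = ⁅a, b⁆ * (b * ⁅a, b⁻¹ * b'⁆ * b⁻¹) := by group
    have hbe : b * (b⁻¹ * b') = b' := by group
    have h1 : mkN ⁅a, b⁻¹ * b'⁆ = 1 := (QuotientGroup.eq_one_iff _).2 (hNmem a _ he)
    have h2 : mkN ⁅a, b'⁆ = mkN ⁅a, b⁆ * (mkN b * mkN ⁅a, b⁻¹ * b'⁆ * (mkN b)⁻¹) := by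
      rw [← hbe, hid]
      simp [map_mul]
    rw [h2, h1]
    group
  have K1 : ∀ (a b a' b' : Eˣ) (γ δ : Γ), (a : E) ∈ 𝒜 γ → (a' : E) ∈ 𝒜 γ →
      (b : E) ∈ 𝒜 δ → (b' : E) ∈ 𝒜 δ → mkN ⁅a, b⁆ = mkN ⁅a', b'⁆ := by
    intro a b a' b' γ δ ha ha' hb hb'
    exact (K1L a a' b γ ha ha').trans (K1R a' b b' δ hb hb')
  -- biadditivity of commutator classes in homogeneous units
  have K2 : ∀ (a₁ a₂ b : Eˣ) (γ₂ δ : Γ), (a₂ : E) ∈ 𝒜 γ₂ → (b : E) ∈ 𝒜 δ →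
      mkN ⁅a₁ * a₂, b⁆ = mkN ⁅a₂, b⁆ * mkN ⁅a₁, b⁆ := by
    intro a₁ a₂ b γ₂ δ ha₂ hb
    have hid : ⁅a₁ * a₂, b⁆ = (a₁ * ⁅a₂, b⁆ * a₁⁻¹) * ⁅a₁, b⁆ := by group
    rw [hid, map_mul, hconj a₁ ⁅a₂, b⁆ (hcomm0 a₂ b γ₂ δ ha₂ hb)]
  have K3 : ∀ (a b₁ b₂ : Eˣ) (γ δ₂ : Γ), (a : E) ∈ 𝒜 γ → (b₂ : E) ∈ 𝒜 δ₂ →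
      mkN ⁅a, b₁ * b₂⁆ = mkN ⁅a, b₁⁆ * mkN ⁅a, b₂⁆ := by
    intro a b₁ b₂ γ δ₂ ha hb₂
    have hid : ⁅a, b₁ * b₂⁆ = ⁅a, b₁⁆ * (b₁ * ⁅a, b₂⁆ * b₁⁻¹) := by group
    rw [hid, map_mul, hconj b₁ ⁅a, b₂⁆ (hcomm0 a b₂ γ δ₂ ha hb₂)]
  -- central degrees kill commutator classes
  have hcentral : ∀ (τ : Γ), τ ∈ GammaT → ∃ z : Eˣ, (z : E) ∈ 𝒜 τ ∧ ∀ t : Eˣ, z * t = t * z := by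
    intro τ hτ
    obtain ⟨x, hx0, hxτ, hxc⟩ := (hGT τ).1 hτ
    obtain ⟨zu, hzu⟩ := hdiv τ x hxτ hx0
    refine ⟨zu, hzu ▸ hxτ, fun t => Units.ext ?_⟩
    show (zu : E) * (t : E) = (t : E) * (zu : E)
    rw [hzu]
    exact (Set.mem_center_iff.mp hxc).comm (t : E)
  have K5L : ∀ (a b : Eˣ) (τ δ : Γ), τ ∈ GammaT → (a : E) ∈ 𝒜 τ → (b : E) ∈ 𝒜 δ →
      mkN ⁅a, b⁆ = 1 := by
    intro a b τ δ hτ ha hb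
    obtain ⟨z, hz, hzc⟩ := hcentral τ hτ
    rw [K1L a z b τ ha hz, commutatorElement_eq_one_iff_mul_comm.2 (hzc b), map_one]
  have K5R : ∀ (a b : Eˣ) (γ τ : Γ), τ ∈ GammaT → (a : E) ∈ 𝒜 γ → (b : E) ∈ 𝒜 τ →
      mkN ⁅a, b⁆ = 1 := by
    intro a b γ τ hτ ha hb
    obtain ⟨z, hz, hzc⟩ := hcentral τ hτ
    rw [K1R a b z τ hb hz, commutatorElement_eq_one_iff_mul_comm.2 (hzc a).symm, map_one]
  -- the image of the commutator subgroup in the quotient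
  set H : Subgroup (Eˣ ⧸ N) := (commutator Eˣ).map mkN with hH
  have hHcomm : ∀ x y : Eˣ ⧸ N, x ∈ H → y ∈ H → x * y = y * x := by
    rintro _ _ ⟨c, hc, rfl⟩ ⟨d, hd, rfl⟩
    rw [← map_mul, ← map_mul]
    have hcd : c * d = ⁅c, d⁆ * (d * c) := by group
    have h1 : mkN ⁅c, d⁆ = 1 := (QuotientGroup.eq_one_iff _).2 (hNmem c d (hCE0 hd))
    rw [hcd, map_mul, h1, one_mul]
  letI : CommGroup ↥H :=
    { (inferInstance : Group ↥H) with
      mul_comm := fun x y => Subtype.ext (hHcomm x y x.2 y.2) }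
  -- the basic bilinear data
  have hc0H : ∀ γ δ : ↥GammaE, mkN ⁅xU γ, xU δ⁆ ∈ H :=
    fun γ δ => ⟨⁅xU γ, xU δ⁆, hmemC _ _, rfl⟩
  set c0 : ↥GammaE → ↥GammaE → ↥H := fun γ δ => ⟨mkN ⁅xU γ, xU δ⁆, hc0H γ δ⟩ with hc0
  set M := ↥GammaE ⧸ GammaT.addSubgroupOf GammaE with hM
  -- inner additive maps
  have hg1add : ∀ (γ : ↥GammaE) (δ₁ δ₂ : ↥GammaE),
      (Additive.ofMul (c0 γ (δ₁ + δ₂)) : Additive ↥H)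
        = Additive.ofMul (c0 γ δ₁) + Additive.ofMul (c0 γ δ₂) := by
    intro γ δ₁ δ₂
    apply congrArg Additive.ofMul  -- reduce to mult. statement
    apply Subtype.ext
    show mkN ⁅xU γ, xU (δ₁ + δ₂)⁆ = mkN ⁅xU γ, xU δ₁⁆ * mkN ⁅xU γ, xU δ₂⁆
    have hprod : ((xU δ₁ * xU δ₂ : Eˣ) : E) ∈ 𝒜 ((δ₁ : Γ) + (δ₂ : Γ)) :=
      SetLike.mul_mem_graded (hxU δ₁) (hxU δ₂)
    have h1 : mkN ⁅xU γ, xU (δ₁ + δ₂)⁆ = mkN ⁅xU γ, xU δ₁ * xU δ₂⁆ :=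
      K1R _ _ _ ((δ₁ : Γ) + (δ₂ : Γ)) (hxU (δ₁ + δ₂)) hprod
    rw [h1, K3 (xU γ) (xU δ₁) (xU δ₂) (γ : Γ) (δ₂ : Γ) (hxU γ) (hxU δ₂)]
  set g1 : ↥GammaE → (↥GammaE →+ Additive ↥H) := fun γ =>
    AddMonoidHom.mk' (fun δ => Additive.ofMul (c0 γ δ)) (hg1add γ) with hg1
  have hg1top : ∀ (γ : ↥GammaE) (τ : ↥GammaE), τ ∈ GammaT.addSubgroupOf GammaE →
      g1 γ τ = 0 := by
    intro γ τ hτ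
    have h1 : mkN ⁅xU γ, xU τ⁆ = 1 :=
      K5R (xU γ) (xU τ) (γ : Γ) (τ : Γ) ((AddSubgroup.mem_addSubgroupOf).1 hτ) (hxU γ) (hxU τ)
    show Additive.ofMul (c0 γ τ) = 0
    apply congrArg Additive.ofMul
    exact Subtype.ext h1
  set g2 : ↥GammaE → (M →+ Additive ↥H) := fun γ =>
    QuotientAddGroup.lift (GammaT.addSubgroupOf GammaE) (g1 γ) (hg1top γ) with hg2
  have hg2mk : ∀ (γ δ : ↥GammaE), g2 γ (QuotientAddGroup.mk δ) = Additive.ofMul (c0 γ δ) :=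
    fun γ δ => rfl
  have hc0K2 : ∀ (γ₁ γ₂ δ : ↥GammaE), c0 (γ₁ + γ₂) δ = c0 γ₁ δ * c0 γ₂ δ := by
    intro γ₁ γ₂ δ
    apply Subtype.ext
    show mkN ⁅xU (γ₁ + γ₂), xU δ⁆ = mkN ⁅xU γ₁, xU δ⁆ * mkN ⁅xU γ₂, xU δ⁆
    have hprod : ((xU γ₁ * xU γ₂ : Eˣ) : E) ∈ 𝒜 ((γ₁ : Γ) + (γ₂ : Γ)) :=
      SetLike.mul_mem_graded (hxU γ₁) (hxU γ₂)
    have h1 : mkN ⁅xU (γ₁ + γ₂), xU δ⁆ = mkN ⁅xU γ₁ * xU γ₂, xU δ⁆ :=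
      K1L _ _ _ ((γ₁ : Γ) + (γ₂ : Γ)) (hxU (γ₁ + γ₂)) hprod
    rw [h1, K2 (xU γ₁) (xU γ₂) (xU δ) (γ₂ : Γ) (δ : Γ) (hxU γ₂) (hxU δ)]
    exact hHcomm _ _ ⟨⁅xU γ₂, xU δ⁆, hmemC _ _, rfl⟩ ⟨⁅xU γ₁, xU δ⁆, hmemC _ _, rfl⟩
  have hg2add : ∀ γ₁ γ₂ : ↥GammaE, g2 (γ₁ + γ₂) = g2 γ₁ + g2 γ₂ := by
    intro γ₁ γ₂
    refine AddMonoidHom.ext fun x => ?_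
    refine QuotientAddGroup.induction_on x ?_
    intro δ
    rw [AddMonoidHom.add_apply, hg2mk, hg2mk, hg2mk, ← ofMul_mul]
    exact congrArg Additive.ofMul (hc0K2 γ₁ γ₂ δ)
  set g3 : ↥GammaE →+ (M →+ Additive ↥H) := AddMonoidHom.mk' g2 hg2add with hg3
  have hg3top : ∀ τ : ↥GammaE, τ ∈ GammaT.addSubgroupOf GammaE → g3 τ = 0 := by
    intro τ hτ
    refine AddMonoidHom.ext fun x => ?_
    refine QuotientAddGroup.induction_on x ?_
    intro δ
    show g2 τ (QuotientAddGroup.mk δ) = 0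
    rw [hg2mk]
    have h1 : mkN ⁅xU τ, xU δ⁆ = 1 :=
      K5L (xU τ) (xU δ) (τ : Γ) (δ : Γ) ((AddSubgroup.mem_addSubgroupOf).1 hτ) (hxU τ) (hxU δ)
    exact congrArg Additive.ofMul (Subtype.ext h1)
  set g4 : M →+ (M →+ Additive ↥H) :=
    QuotientAddGroup.lift (GammaT.addSubgroupOf GammaE) g3 hg3top with hg4
  have hg4mk : ∀ γ δ : ↥GammaE,
      g4 (QuotientAddGroup.mk γ) (QuotientAddGroup.mk δ) = Additive.ofMul (c0 γ δ) :=
    fun γ δ => rfl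
  -- upgrade to a bilinear map over ℤ
  set B2 : M →ₗ[ℤ] M →ₗ[ℤ] Additive ↥H :=
    (AddMonoidHom.mk' (fun x => (g4 x).toIntLinearMap)
      (fun x y => LinearMap.ext fun z => by
        show g4 (x + y) z = g4 x z + g4 y z
        rw [map_add, AddMonoidHom.add_apply])).toIntLinearMap with hB2def
  have hB2mk : ∀ γ δ : ↥GammaE,
      B2 (QuotientAddGroup.mk γ) (QuotientAddGroup.mk δ) = Additive.ofMul (c0 γ δ) :=
    fun γ δ => rfl
  have hB2diag : ∀ x : M, B2 x x = 0 := by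
    intro x
    refine QuotientAddGroup.induction_on x ?_
    intro γ
    rw [hB2mk]
    have h1 : mkN ⁅xU γ, xU γ⁆ = 1 := by rw [commutatorElement_self, map_one]
    exact congrArg Additive.ofMul (Subtype.ext h1)
  set alt : M [⋀^Fin 2]→ₗ[ℤ] Additive ↥H := auxBilinAlt B2 hB2diag with halt
  set L : ExteriorAlgebra ℤ M →ₗ[ℤ] Additive ↥H :=
    ExteriorAlgebra.liftAlternating (auxAltFamily alt) with hL
  -- the homomorphism
  set φf : Multiplicative ↥(⋀[ℤ]^2 M) → Eˣ ⧸ N :=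
    fun x => ((Additive.toMul (L (x.toAdd : ↥(⋀[ℤ]^2 M)).val) : ↥H) : Eˣ ⧸ N) with hφf
  have hφmul : ∀ a b : Multiplicative ↥(⋀[ℤ]^2 M), φf (a * b) = φf a * φf b := by
    intro a b
    show ((Additive.toMul (L ((a.toAdd : ↥(⋀[ℤ]^2 M)).val + (b.toAdd : ↥(⋀[ℤ]^2 M)).val))
        : ↥H) : Eˣ ⧸ N) = _
    rw [map_add]
    rfl
  set φ : Multiplicative ↥(⋀[ℤ]^2 M) →* Eˣ ⧸ N := MonoidHom.mk' φf hφmul with hφ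
  have hιmem : ∀ v : Fin 2 → M, ExteriorAlgebra.ιMulti ℤ 2 v ∈ ⋀[ℤ]^2 M :=
    fun v => ExteriorAlgebra.ιMulti_range ℤ 2 (Set.mem_range_self v)
  have hφwedge : ∀ γ δ : ↥GammaE,
      φ (Multiplicative.ofAdd (⟨ExteriorAlgebra.ιMulti ℤ 2
          ![QuotientAddGroup.mk γ, QuotientAddGroup.mk δ], hιmem _⟩ : ↥(⋀[ℤ]^2 M)))
        = mkN ⁅xU γ, xU δ⁆ := by
    intro γ δ
    show ((Additive.toMul (L (ExteriorAlgebra.ιMulti ℤ 2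
        ![QuotientAddGroup.mk γ, QuotientAddGroup.mk δ])) : ↥H) : Eˣ ⧸ N) = _
    rw [hL, ExteriorAlgebra.liftAlternating_apply_ιMulti]
    show ((Additive.toMul (alt ![QuotientAddGroup.mk γ, QuotientAddGroup.mk δ])
        : ↥H) : Eˣ ⧸ N) = _
    have halt2 : alt ![QuotientAddGroup.mk γ, QuotientAddGroup.mk δ]
        = Additive.ofMul (c0 γ δ) := by
      show B2 (![QuotientAddGroup.mk γ, QuotientAddGroup.mk δ] 0)
          (![QuotientAddGroup.mk γ, QuotientAddGroup.mk δ] 1) = Additive.ofMul (c0 γ δ)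
      rw [Matrix.cons_val_zero, Matrix.cons_val_one, Matrix.cons_val_zero, hB2mk]
    rw [halt2]
    rfl
  -- the range of φ is the image of the commutator subgroup
  have himg : (QuotientGroup.mk : Eˣ → Eˣ ⧸ N) '' (commutator Eˣ : Set Eˣ) = (H : Set _) := by
    rw [hH, Subgroup.coe_map]
    rfl
  have hrange : Set.range φ = (QuotientGroup.mk : Eˣ → Eˣ ⧸ N) '' (commutator Eˣ : Set Eˣ) := by
    rw [himg]
    apply Set.Subset.antisymm
    · rintro _ ⟨x, rfl⟩
      exact (Additive.toMul (L (x.toAdd : ↥(⋀[ℤ]^2 M)).val) : ↥H).2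
    · have hle : H ≤ φ.range := by
        rw [hH, commutator_eq_closure, MonoidHom.map_closure, Subgroup.closure_le]
        rintro _ ⟨_, ⟨a, b, rfl⟩, rfl⟩
        obtain ⟨γ, haγ, hγE⟩ := hdegE a
        obtain ⟨δ, hbδ, hδE⟩ := hdegE b
        have h1 : mkN ⁅a, b⁆ = mkN ⁅xU ⟨γ, hγE⟩, xU ⟨δ, hδE⟩⁆ :=
          K1 a b (xU ⟨γ, hγE⟩) (xU ⟨δ, hδE⟩) γ δ haγ (hxU ⟨γ, hγE⟩) hbδ (hxU ⟨δ, hδE⟩)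
        rw [SetLike.mem_coe, h1, ← hφwedge ⟨γ, hγE⟩ ⟨δ, hδE⟩]
        exact ⟨_, rfl⟩
      intro h hh
      exact hle hh
  refine ⟨⟨φ, hrange⟩, ?_, ?_⟩
  · -- the image of the commutator subgroup is abelian
    intro a b ha hb
    rw [himg] at ha hb
    exact hHcomm a b ha hb
  · -- quotients by n-th powers
    intro nn hnn Nn _ hNn
    have hNle : N ≤ Nn := hNn ▸ le_sup_right
    set π : Eˣ ⧸ N →* Eˣ ⧸ Nn :=
      QuotientGroup.map N Nn (MonoidHom.id Eˣ) (by rwa [Subgroup.comap_id]) with hπ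
    have hπmk : ∀ c : Eˣ, π (mkN c) = (QuotientGroup.mk c : Eˣ ⧸ Nn) :=
      fun c => QuotientGroup.map_mk N Nn (MonoidHom.id Eˣ) _ c
    refine ⟨π.comp φ, ?_, ?_⟩
    · rw [MonoidHom.coe_comp, Set.range_comp, hrange, ← Set.image_comp]
      apply Set.image_congr
      intro c _
      exact hπmk c
    · intro x
      rw [ofAdd_nsmul, map_pow]
      have hx : φ (Multiplicative.ofAdd x) ∈ Set.range φ := ⟨_, rfl⟩
      rw [hrange] at hx
      obtain ⟨c, hc, hceq⟩ := hx
      rw [MonoidHom.comp_apply, ← hceq]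
      have h1 : (QuotientGroup.mk c : Eˣ ⧸ N) = mkN c := rfl
      rw [h1, hπmk]
      have h2 : ((QuotientGroup.mk' Nn) c) ^ nn = (QuotientGroup.mk' Nn) (c ^ nn) := by
        rw [map_pow]
      show ((QuotientGroup.mk' Nn) c) ^ nn = 1
      rw [h2]
      refine (QuotientGroup.eq_one_iff _).2 ?_
      rw [hNn]
      exact Subgroup.mem_sup_left (Subgroup.subset_closure ⟨c, hc, rfl⟩)
end

section
/- Let Γ be a torsion-free abelian group, E a Γ-graded division ring, n > 1, and δ ∈ Γ such that the order of δ + Γ_E in Γ/Γ_E is greater than 3n (possibly infinite). Let S = Mₙ(E)(δ̄) with δ̄ = (0, δ, 2δ, …, (n−1)δ). Then: (a) the degree-0 component S₀ consists exactly of the diagonal matrices with entries in E₀; (b) Γ_S* = Γ_E, i.e., the degrees of homogeneous units of S are exactly the elements of Γ_E; and (c) S_h* = S₀* · {c·𝕀ₙ : c ∈ E_h*}. -/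
set_option maxHeartbeats 1000000

/-- The inverse of a homogeneous unit in a graded ring is homogeneous of
opposite degree. -/
theorem homog_unit_inv {Γ E : Type*} [AddCommGroup Γ] [DecidableEq Γ]
    [Ring E] (𝒜 : Γ → AddSubgroup E) [GradedRing 𝒜]
    {γ : Γ} (u : Eˣ) (h : (u : E) ∈ 𝒜 γ) : ((u⁻¹ : Eˣ) : E) ∈ 𝒜 (-γ) := by
  set z : E := (DirectSum.decompose 𝒜 ((u⁻¹ : Eˣ) : E) (-γ) : E) with hz
  have hone : (DirectSum.decompose 𝒜 (1 : E) 0 : E) = 1 := by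
    rw [DirectSum.decompose_one]
    simp [DirectSum.one_def, DirectSum.of_eq_same]
  have h1 : ((u : E)) * z = 1 := by
    have := DirectSum.coe_decompose_mul_add_of_left_mem (i := γ) (j := -γ) 𝒜
      (a := (u : E)) (b := ((u⁻¹ : Eˣ) : E)) h
    rw [Units.mul_inv, add_neg_cancel, hone] at this
    exact this.symm
  have h2 : ((u⁻¹ : Eˣ) : E) = z := by
    calc ((u⁻¹:Eˣ):E) = ((u⁻¹:Eˣ):E) * ((u:E) * z) := by rw [h1, mul_one]
    _ = (((u⁻¹:Eˣ):E) * (u:E)) * z := by rw [mul_assoc]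
    _ = z := by rw [Units.inv_mul, one_mul]
  rw [h2, hz]
  exact SetLike.coe_mem _

/-- let `Γ` be a torsion-free abelian group, `E` a `Γ`-graded
division ring, `n > 1`, and `δ ∈ Γ` whose coset `δ + Γ_E` has order `> 3n` (possibly
infinite) in `Γ/Γ_E`.  Let `S = Mₙ(E)(δ̄)` with `δ̄ = (0, δ, 2δ, …, (n-1)δ)`.  Then:
(a) `S₀` consists exactly of the diagonal matrices with entries in `E₀`;
(b) `Γ_S* = Γ_E`; and (c) `S_h* = S₀* · {c·𝕀ₙ : c ∈ E_h*}`. -/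
theorem shifted_matrix_ring_structure {Γ E : Type*} [AddCommGroup Γ] [DecidableEq Γ]
    [Ring E] [Nontrivial E] (𝒜 : Γ → AddSubgroup E) [GradedRing 𝒜]
    (hdiv : ∀ (γ : Γ) (x : E), x ∈ 𝒜 γ → x ≠ 0 → IsUnit x)
    -- `Γ` is torsion-free
    (htf : ∀ (γ : Γ) (m : ℕ), m ≠ 0 → m • γ = 0 → γ = 0)
    {n : ℕ} (hn : 1 < n) (δ : Γ)
    -- the order of `δ + Γ_E` in `Γ/Γ_E` exceeds `3n` (possibly infinite)
    (horder : ∀ m : ℕ, 1 ≤ m → m ≤ 3 * n → ¬ ∃ x : E, x ≠ 0 ∧ x ∈ 𝒜 (m • δ)) :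
    -- (a) `S₀` consists exactly of the diagonal matrices over `E₀`
    (∀ A : Matrix (Fin n) (Fin n) E,
      A ∈ MatrixGrade 𝒜 (fun i : Fin n => (i : ℕ) • δ) 0 ↔
        ((∀ i j : Fin n, i ≠ j → A i j = 0) ∧ ∀ i, A i i ∈ 𝒜 (0 : Γ))) ∧
    -- (b) `Γ_S* = Γ_E`
    (∀ lam : Γ,
      (∃ A : (Matrix (Fin n) (Fin n) E)ˣ,
        A.val ∈ MatrixGrade 𝒜 (fun i : Fin n => (i : ℕ) • δ) lam) ↔
      (∃ x : E, x ≠ 0 ∧ x ∈ 𝒜 lam)) ∧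
    -- (c) `S_h* = S₀* · (E_h* · 𝕀ₙ)`
    (∀ A : (Matrix (Fin n) (Fin n) E)ˣ,
      (∃ lam, A.val ∈ MatrixGrade 𝒜 (fun i : Fin n => (i : ℕ) • δ) lam) ↔
      ∃ (B : (Matrix (Fin n) (Fin n) E)ˣ) (c : Eˣ),
        B.val ∈ MatrixGrade 𝒜 (fun i : Fin n => (i : ℕ) • δ) 0 ∧
        B⁻¹.val ∈ MatrixGrade 𝒜 (fun i : Fin n => (i : ℕ) • δ) 0 ∧
        (∃ γ : Γ, c.val ∈ 𝒜 γ) ∧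
        A.val = B.val * (c.val • (1 : Matrix (Fin n) (Fin n) E))) := by
  classical
  -- no nonzero homogeneous elements in degree m • δ for small nonzero m : ℤ
  have hzero : ∀ m : ℤ, m ≠ 0 → m.natAbs ≤ 3 * n → ∀ x : E, x ∈ 𝒜 (m • δ) → x = 0 := by
    intro m hm hmn x hx
    by_contra hx0
    rcases lt_or_gt_of_ne hm with hneg | hpos
    · obtain ⟨u, hu⟩ := hdiv _ x hx hx0
      have hinv : ((u⁻¹ : Eˣ) : E) ∈ 𝒜 (-(m • δ)) := homog_unit_inv 𝒜 u (hu ▸ hx)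
      refine horder m.natAbs (by omega) hmn ⟨((u⁻¹ : Eˣ) : E), Units.ne_zero _, ?_⟩
      have he : -(m • δ) = (m.natAbs : ℕ) • δ := by
        rw [← neg_zsmul, ← natCast_zsmul]
        congr 1
        omega
      rwa [he] at hinv
    · refine horder m.natAbs (by omega) hmn ⟨x, hx0, ?_⟩
      have he : (m.natAbs : ℕ) • δ = m • δ := by
        rw [← natCast_zsmul]
        congr 1
        omega
      rwa [he]
  -- scalar matrices multiply
  have hscal : ∀ a b : E, (a • (1 : Matrix (Fin n) (Fin n) E)) * (b • 1) = (a * b) • 1 := by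
    intro a b
    ext i j
    simp [Matrix.mul_apply, Matrix.one_apply, smul_eq_mul, mul_ite, ite_mul,
      Finset.sum_ite_eq, Finset.sum_ite_eq']
  have hentR : ∀ (M : Matrix (Fin n) (Fin n) E) (a : E) (i j : Fin n),
      (M * (a • 1)) i j = M i j * a := by
    intro M a i j
    simp [Matrix.mul_apply, Matrix.one_apply, smul_eq_mul, mul_ite, ite_mul,
      Finset.sum_ite_eq, Finset.sum_ite_eq', mul_comm]
  have hentL : ∀ (a : E) (M : Matrix (Fin n) (Fin n) E) (i j : Fin n),
      ((a • 1) * M) i j = a * M i j := by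
    intro a M i j
    simp [Matrix.mul_apply, Matrix.one_apply, smul_eq_mul, mul_ite, ite_mul,
      Finset.sum_ite_eq, Finset.sum_ite_eq']
  -- the key structure lemma about homogeneous unit matrices
  have key : ∀ (lam : Γ) (A : (Matrix (Fin n) (Fin n) E)ˣ),
      A.val ∈ MatrixGrade 𝒜 (fun i : Fin n => (i : ℕ) • δ) lam →
      (∀ i j : Fin n, i ≠ j → A.val i j = 0) ∧
      (∀ i j : Fin n, i ≠ j → (A⁻¹).val i j = 0) ∧
      (∀ i : Fin n, A.val i i ∈ 𝒜 lam ∧ A.val i i * (A⁻¹).val i i = 1 ∧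
        (A⁻¹).val i i * A.val i i = 1) := by
    intro lam A hA
    have hAB : A.val * (A⁻¹).val = 1 := by
      rw [← Units.val_mul, mul_inv_cancel, Units.val_one]
    have hBA : (A⁻¹).val * A.val = 1 := by
      rw [← Units.val_mul, inv_mul_cancel, Units.val_one]
    -- all nonzero entries lie on a single diagonal
    have hsd : ∀ i j i' j' : Fin n, A.val i j ≠ 0 → A.val i' j' ≠ 0 →
        ((j : ℕ) : ℤ) - ((i : ℕ) : ℤ) = ((j' : ℕ) : ℤ) - ((i' : ℕ) : ℤ) := by
      intro i j i' j' h1 h2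
      by_contra hne
      obtain ⟨u, hu⟩ := hdiv _ _ (hA i j) h1
      have hui : ((u⁻¹ : Eˣ) : E) ∈ 𝒜 (-(lam + (j : ℕ) • δ - (i : ℕ) • δ)) :=
        homog_unit_inv 𝒜 u (hu ▸ hA i j)
      have hmul : ((u⁻¹ : Eˣ) : E) * A.val i' j' ∈
          𝒜 ((-(lam + (j : ℕ) • δ - (i : ℕ) • δ)) + (lam + (j' : ℕ) • δ - (i' : ℕ) • δ)) :=
        SetLike.mul_mem_graded hui (hA i' j')
      have hdegeq : (-(lam + (j : ℕ) • δ - (i : ℕ) • δ)) + (lam + (j' : ℕ) • δ - (i' : ℕ) • δ)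
          = (((j' : ℕ) : ℤ) - ((i' : ℕ) : ℤ) - ((j : ℕ) : ℤ) + ((i : ℕ) : ℤ)) • δ := by
        rw [add_zsmul, sub_zsmul, sub_zsmul, natCast_zsmul, natCast_zsmul, natCast_zsmul,
          natCast_zsmul]
        abel
      rw [hdegeq] at hmul
      have hne0 : ((u⁻¹ : Eˣ) : E) * A.val i' j' ≠ 0 := by
        intro h0
        have h3 := congrArg (fun t => (u : E) * t) h0
        simp only [Units.mul_inv_cancel_left, mul_zero] at h3
        exact h2 h3
      have hi := i.isLt; have hj := j.isLt; have hi' := i'.isLt; have hj' := j'.isLt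
      exact hne0 (hzero _ (by omega) (by omega) _ hmul)
    -- there is a nonzero entry in row 0
    have hn0 : 0 < n := by omega
    set i0 : Fin n := ⟨0, hn0⟩ with hi0
    have hi0v : ((i0 : Fin n) : ℕ) = 0 := rfl
    obtain ⟨k, hk⟩ : ∃ k, A.val i0 k ≠ 0 := by
      by_contra hall
      push_neg at hall
      have h3 : (A.val * (A⁻¹).val) i0 i0 = 1 := by rw [hAB, Matrix.one_apply_eq]
      rw [Matrix.mul_apply,
        Finset.sum_eq_zero (fun b _ => by rw [hall b, zero_mul])] at h3
      exact zero_ne_one h3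
    -- that entry is on the main diagonal
    have hk0 : (k : ℕ) = 0 := by
      by_contra hkne
      have hcol : ∀ i : Fin n, A.val i i0 = 0 := by
        intro i
        by_contra hi
        have h4 := hsd i i0 i0 k hi hk
        rw [hi0v] at h4
        have := i.isLt
        have := k.isLt
        omega
      have h3 : ((A⁻¹).val * A.val) i0 i0 = 1 := by rw [hBA, Matrix.one_apply_eq]
      rw [Matrix.mul_apply,
        Finset.sum_eq_zero (fun b _ => by rw [hcol b, mul_zero])] at h3
      exact zero_ne_one h3
    -- the matrix is diagonal
    have hoffA : ∀ i j : Fin n, i ≠ j → A.val i j = 0 := by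
      intro i j hij
      by_contra h
      have h4 := hsd i j i0 k h hk
      rw [hi0v] at h4
      have hji : (j : ℕ) = (i : ℕ) := by omega
      exact hij (Fin.ext hji.symm)
    have hdiagmem : ∀ i : Fin n, A.val i i ∈ 𝒜 lam := by
      intro i
      have h5 := hA i i
      rwa [add_sub_cancel_right] at h5
    have hABii : ∀ i : Fin n, A.val i i * (A⁻¹).val i i = 1 := by
      intro i
      have h5 : (A.val * (A⁻¹).val) i i = A.val i i * (A⁻¹).val i i := by
        rw [Matrix.mul_apply]
        refine Finset.sum_eq_single_of_mem i (Finset.mem_univ i) ?_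
        intro b _ hb
        rw [hoffA i b (Ne.symm hb), zero_mul]
      rw [hAB] at h5
      rw [← h5, Matrix.one_apply_eq]
    have hBAii : ∀ i : Fin n, (A⁻¹).val i i * A.val i i = 1 := by
      intro i
      have h5 : ((A⁻¹).val * A.val) i i = (A⁻¹).val i i * A.val i i := by
        rw [Matrix.mul_apply]
        refine Finset.sum_eq_single_of_mem i (Finset.mem_univ i) ?_
        intro b _ hb
        rw [hoffA b i hb, mul_zero]
      rw [hBA] at h5
      rw [← h5, Matrix.one_apply_eq]
    have hBdiag : (A⁻¹).val = Matrix.diagonal (fun i => (A⁻¹).val i i) := by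
      have hAD : A.val * Matrix.diagonal (fun i => (A⁻¹).val i i) = 1 := by
        ext i j
        rw [Matrix.mul_apply]
        rw [Finset.sum_eq_single_of_mem j (Finset.mem_univ j) (fun b _ hb => by
          rw [Matrix.diagonal_apply_ne _ hb, mul_zero])]
        rw [Matrix.diagonal_apply_eq]
        by_cases hij : i = j
        · subst hij
          rw [hABii, Matrix.one_apply_eq]
        · rw [hoffA i j hij, zero_mul, Matrix.one_apply_ne hij]
      calc (A⁻¹).val = (A⁻¹).val * (A.val * Matrix.diagonal fun i => (A⁻¹).val i i) := by
            rw [hAD, mul_one]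
      _ = ((A⁻¹).val * A.val) * Matrix.diagonal fun i => (A⁻¹).val i i := by rw [mul_assoc]
      _ = _ := by rw [hBA, one_mul]
    have hoffB : ∀ i j : Fin n, i ≠ j → (A⁻¹).val i j = 0 := by
      intro i j hij
      rw [hBdiag]
      exact Matrix.diagonal_apply_ne _ hij
    exact ⟨hoffA, hoffB, fun i => ⟨hdiagmem i, hABii i, hBAii i⟩⟩
  refine ⟨?_, ?_, ?_⟩
  -- part (a)
  · intro A
    constructor
    · intro hA
      constructor
      · intro i j hij
        have h5 := hA i j
        have hdeg : (0 : Γ) + (j : ℕ) • δ - (i : ℕ) • δ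
            = (((j : ℕ) : ℤ) - ((i : ℕ) : ℤ)) • δ := by
          rw [sub_zsmul, natCast_zsmul, natCast_zsmul]
          abel
        rw [hdeg] at h5
        have hi := i.isLt; have hj := j.isLt
        have hij' : (i : ℕ) ≠ (j : ℕ) := fun h => hij (Fin.ext h)
        exact hzero _ (by omega) (by omega) _ h5
      · intro i
        have h5 := hA i i
        rwa [add_sub_cancel_right] at h5
    · rintro ⟨hoff, hdiag⟩ i j
      by_cases hij : i = j
      · subst hij
        rw [add_sub_cancel_right]
        exact hdiag i
      · rw [hoff i j hij]
        exact zero_mem _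
  -- part (b)
  · intro lam
    constructor
    · rintro ⟨A, hA⟩
      obtain ⟨hoffA, hoffB, hdiag⟩ := key lam A hA
      obtain ⟨hm, h1, _h2⟩ := hdiag ⟨0, by omega⟩
      refine ⟨_, ?_, hm⟩
      intro h0
      rw [h0, zero_mul] at h1
      exact zero_ne_one h1
    · rintro ⟨x, hx0, hx⟩
      obtain ⟨u, hu⟩ := hdiv _ _ hx hx0
      subst hu
      refine ⟨⟨(u : E) • 1, ((u⁻¹ : Eˣ) : E) • 1, ?_, ?_⟩, ?_⟩
      · rw [hscal, Units.mul_inv, one_smul]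
      · rw [hscal, Units.inv_mul, one_smul]
      · intro i j
        show ((u : E) • (1 : Matrix (Fin n) (Fin n) E)) i j ∈ _
        by_cases hij : i = j
        · subst hij
          rw [add_sub_cancel_right]
          simp only [Matrix.smul_apply, Matrix.one_apply_eq, smul_eq_mul, mul_one]
          exact hx
        · simp only [Matrix.smul_apply, Matrix.one_apply_ne hij, smul_eq_mul, mul_zero]
          exact zero_mem _
  -- part (c)
  · intro A
    constructor
    · rintro ⟨lam, hA⟩
      obtain ⟨hoffA, hoffB, hdiag⟩ := key lam A hA
      have hn0 : 0 < n := by omega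
      set i0 : Fin n := ⟨0, hn0⟩ with hi0
      obtain ⟨hm0, h10, h20⟩ := hdiag i0
      set c : Eˣ := ⟨A.val i0 i0, (A⁻¹).val i0 i0, h10, h20⟩ with hc
      have hcmem : (c : E) ∈ 𝒜 lam := hm0
      have hcinvmem : ((c⁻¹ : Eˣ) : E) ∈ 𝒜 (-lam) := homog_unit_inv 𝒜 c hcmem
      have hBmem : ∀ i : Fin n, (A⁻¹).val i i ∈ 𝒜 (-lam) := by
        intro i
        exact homog_unit_inv 𝒜 ⟨A.val i i, (A⁻¹).val i i, (hdiag i).2.1, (hdiag i).2.2⟩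
          (hdiag i).1
      refine ⟨A * ⟨((c⁻¹ : Eˣ) : E) • 1, (c : E) • 1,
        by rw [hscal, Units.inv_mul, one_smul], by rw [hscal, Units.mul_inv, one_smul]⟩,
        c, ?_, ?_, ⟨lam, hcmem⟩, ?_⟩
      · intro i j
        rw [Units.val_mul]
        show (A.val * (((c⁻¹ : Eˣ) : E) • 1)) i j ∈ _
        rw [hentR]
        by_cases hij : i = j
        · subst hij
          rw [add_sub_cancel_right]
          have := SetLike.mul_mem_graded (hdiag i).1 hcinvmem
          rwa [add_neg_cancel] at this
        · rw [hoffA i j hij, zero_mul]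
          exact zero_mem _
      · intro i j
        rw [mul_inv_rev, Units.val_mul]
        show (((c : E) • 1) * (A⁻¹).val) i j ∈ _
        rw [hentL]
        by_cases hij : i = j
        · subst hij
          rw [add_sub_cancel_right]
          have := SetLike.mul_mem_graded hcmem (hBmem i)
          rwa [add_neg_cancel] at this
        · rw [hoffB i j hij, mul_zero]
          exact zero_mem _
      · rw [Units.val_mul]
        show A.val = (A.val * (((c⁻¹ : Eˣ) : E) • 1)) * ((c : E) • 1)
        rw [mul_assoc, hscal, Units.inv_mul, one_smul, mul_one]
    · rintro ⟨B, c, hB, _hBinv, ⟨γ, hcγ⟩, hval⟩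
      refine ⟨γ, ?_⟩
      intro i j
      rw [hval, hentR]
      have h5 := SetLike.mul_mem_graded (hB i j) hcγ
      have hdeg : (0 : Γ) + (j : ℕ) • δ - (i : ℕ) • δ + γ
          = γ + (j : ℕ) • δ - (i : ℕ) • δ := by abel
      rwa [hdeg] at h5
end

section
/- Let Γ be a torsion-free abelian group, E a Γ-graded division ring whose degree-0 component E₀ is contained in the center of E, n > 1, and δ ∈ Γ such that the order of δ + Γ_E in Γ/Γ_E is greater than 3n (possibly infinite). Let S = Mₙ(E)(δ̄) with δ̄ = (0, δ, 2δ, …, (n−1)δ). Then the commutator subgroup of the group of homogeneous units of S consists exactly of the scalar matrices with entries in the commutator subgroup of E_h*: [S_h*, S_h*] = {c·𝕀ₙ : c ∈ [E_h*, E_h*]}. -/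
set_option maxHeartbeats 1000000

open scoped commutatorElement

/-- If `z` and `w` commute with everything, `⁅z*a, w*b⁆ = ⁅a,b⁆`. -/
lemma aux_comm_erase {G : Type*} [Group G] (z w a b : G)
    (hz : ∀ x, z * x = x * z) (hw : ∀ x, w * x = x * w) :
    ⁅z * a, w * b⁆ = ⁅a, b⁆ := by
  simp only [commutatorElement_def]
  calc z * a * (w * b) * (z * a)⁻¹ * (w * b)⁻¹
      = z * (a * w * b * a⁻¹) * z⁻¹ * (b⁻¹ * w⁻¹) := by group
    _ = (a * w * b * a⁻¹) * z * z⁻¹ * (b⁻¹ * w⁻¹) := by rw [hz]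
    _ = a * (w * (b * a⁻¹ * b⁻¹)) * w⁻¹ := by group
    _ = a * ((b * a⁻¹ * b⁻¹) * w) * w⁻¹ := by rw [hw]
    _ = a * b * a⁻¹ * b⁻¹ := by group

/-- A homogeneous unit in a graded ring has a homogeneous two-sided inverse of
opposite degree. -/
lemma aux_graded_inv0 {Γ E : Type*} [AddCommGroup Γ] [DecidableEq Γ] [Ring E]
    (𝒜 : Γ → AddSubgroup E) [GradedRing 𝒜] {β : Γ} {y : E}
    (hy : y ∈ 𝒜 β) (hu : IsUnit y) :
    ∃ z : E, z ∈ 𝒜 (-β) ∧ z * y = 1 ∧ y * z = 1 := by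
  obtain ⟨u, rfl⟩ := hu
  set z : E := (DirectSum.decompose 𝒜 (↑u⁻¹ : E) (-β) : E) with hzdef
  have h1 : z * ↑u = 1 := by
    have h2 := DirectSum.coe_decompose_mul_add_of_right_mem 𝒜 (a := (↑u⁻¹ : E))
      (i := -β) hy
    rw [Units.inv_mul, neg_add_cancel] at h2
    rw [DirectSum.decompose_of_mem_same 𝒜 (SetLike.one_mem_graded 𝒜)] at h2
    exact h2.symm
  have h3 : z = ↑u⁻¹ := by
    calc z = z * (↑u * ↑u⁻¹) := by rw [Units.mul_inv, mul_one]
      _ = (z * ↑u) * ↑u⁻¹ := by rw [mul_assoc]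
      _ = ↑u⁻¹ := by rw [h1, one_mul]
  exact ⟨z, SetLike.coe_mem _, h1, by rw [h3, Units.mul_inv]⟩

/-- Structure of homogeneous units of the shifted matrix ring: they are diagonal,
with unit entries all of the same degree, differing by degree-0 factors. -/
lemma aux_struct {Γ E : Type*} [AddCommGroup Γ] [DecidableEq Γ] [Ring E] [Nontrivial E]
    (𝒜 : Γ → AddSubgroup E) [GradedRing 𝒜]
    (hdiv : ∀ (γ : Γ) (x : E), x ∈ 𝒜 γ → x ≠ 0 → IsUnit x)
    {n : ℕ} (hn0 : 0 < n) (δ : Γ)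
    (hzero : ∀ m : ℤ, m ≠ 0 → m.natAbs ≤ 2 * n → ∀ x : E, x ∈ 𝒜 (m • δ) → x = 0)
    (A : (Matrix (Fin n) (Fin n) E)ˣ) (lam : Γ)
    (hA : ∀ i j : Fin n, A.val i j ∈ 𝒜 (lam + (j : ℕ) • δ - (i : ℕ) • δ)) :
    ∃ (u : Eˣ) (ζ : Fin n → Eˣ), u.val ∈ 𝒜 lam ∧ (∀ i, (ζ i).val ∈ 𝒜 (0 : Γ)) ∧
      A.val = Matrix.diagonal (fun i => (ζ i * u).val) ∧
      (A⁻¹).val = Matrix.diagonal (fun i => ((ζ i * u)⁻¹).val) := by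
  classical
  -- two nonzero entries lie on the same diagonal
  have hkey : ∀ i j i' j' : Fin n, A.val i j ≠ 0 → A.val i' j' ≠ 0 →
      (j : ℤ) - (i : ℤ) = (j' : ℤ) - (i' : ℤ) := by
    intro i j i' j' hx hy
    by_contra hne
    set m : ℤ := ((j : ℤ) - i) - ((j' : ℤ) - i') with hm
    have hm0 : m ≠ 0 := by omega
    have hyu : IsUnit (A.val i' j') := hdiv _ _ (hA i' j') hy
    obtain ⟨z, hzmem, hzy, hyz⟩ := aux_graded_inv0 𝒜 (hA i' j') hyu
    have hdeg : (lam + (j : ℕ) • δ - (i : ℕ) • δ) + -(lam + (j' : ℕ) • δ - (i' : ℕ) • δ)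
        = m • δ := by
      simp only [hm, ← natCast_zsmul, sub_smul]
      abel
    have hmul : A.val i j * z ∈ 𝒜 (m • δ) := by
      rw [← hdeg]; exact SetLike.mul_mem_graded (hA i j) hzmem
    have hnz : A.val i j * z ≠ 0 := by
      intro h
      apply hx
      calc A.val i j = A.val i j * (z * A.val i' j') := by rw [hzy, mul_one]
        _ = (A.val i j * z) * A.val i' j' := by rw [mul_assoc]
        _ = 0 := by rw [h, zero_mul]
    have hb1 : (j : ℤ) < n := by exact_mod_cast j.isLt
    have hb2 : (i : ℤ) < n := by exact_mod_cast i.isLt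
    have hb3 : (j' : ℤ) < n := by exact_mod_cast j'.isLt
    have hb4 : (i' : ℤ) < n := by exact_mod_cast i'.isLt
    have hb5 : (0:ℤ) ≤ (j : ℤ) := by positivity
    have hb6 : (0:ℤ) ≤ (i : ℤ) := by positivity
    have hb7 : (0:ℤ) ≤ (j' : ℤ) := by positivity
    have hb8 : (0:ℤ) ≤ (i' : ℤ) := by positivity
    exact hnz (hzero m hm0 (by omega) _ hmul)
  -- every row has a nonzero entry
  have hrow : ∀ i : Fin n, ∃ l, A.val i l ≠ 0 := by
    intro i
    by_contra h
    push_neg at h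
    have h1 : (A.val * (A⁻¹).val) i i = 1 := by
      rw [A.mul_inv]; exact Matrix.one_apply_eq i
    rw [Matrix.mul_apply, Finset.sum_eq_zero (fun l _ => by rw [h l, zero_mul])] at h1
    exact zero_ne_one h1
  set i₀ : Fin n := ⟨0, hn0⟩ with hi₀
  -- the (0,0) entry is nonzero
  have h00 : A.val i₀ i₀ ≠ 0 := by
    obtain ⟨j₀, hj₀⟩ := hrow i₀
    by_cases hj : j₀ = i₀
    · rwa [hj] at hj₀
    · exfalso
      have hj0pos : (0 : ℤ) < (j₀ : ℤ) := by
        have : (j₀ : ℕ) ≠ 0 := fun h => hj (Fin.ext (by simp [hi₀, h]))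
        omega
      have hcol : ∀ l, A.val l i₀ = 0 := by
        intro l
        by_contra hl
        have := hkey l i₀ i₀ j₀ hl hj₀
        have hb : (0:ℤ) ≤ (l : ℤ) := by positivity
        simp only [hi₀] at this
        omega
      have h1 : ((A⁻¹).val * A.val) i₀ i₀ = 1 := by
        rw [A.inv_mul]; exact Matrix.one_apply_eq i₀
      rw [Matrix.mul_apply, Finset.sum_eq_zero (fun l _ => by rw [hcol l, mul_zero])] at h1
      exact zero_ne_one h1
  -- all diagonal entries are nonzero
  have hdiagnz : ∀ i, A.val i i ≠ 0 := by
    intro i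
    obtain ⟨l, hl⟩ := hrow i
    have := hkey i l i₀ i₀ hl h00
    have hli : l = i := by
      apply Fin.ext
      simp only [hi₀] at this
      omega
    rwa [hli] at hl
  -- off-diagonal entries vanish
  have hdiag : ∀ i j, i ≠ j → A.val i j = 0 := by
    intro i j hij
    by_contra h
    have := hkey i j i i h (hdiagnz i)
    exact hij (Fin.ext (by omega)).symm
  -- diagonal entries are homogeneous of degree lam
  have hmem : ∀ i, A.val i i ∈ 𝒜 lam := by
    intro i
    have := hA i i
    rwa [add_sub_cancel_right] at this
  -- package diagonal entries as units
  set d : Fin n → Eˣ := fun i => (hdiv _ _ (hmem i) (hdiagnz i)).unit with hd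
  have hdval : ∀ i, (d i).val = A.val i i := fun i => (hdiv _ _ (hmem i) (hdiagnz i)).unit_spec
  have hAval : A.val = Matrix.diagonal (fun i => (d i).val) := by
    ext i j
    by_cases h : i = j
    · subst h; rw [Matrix.diagonal_apply_eq, hdval]
    · rw [Matrix.diagonal_apply_ne _ h, hdiag i j h]
  have hAinv : (A⁻¹).val
      = Matrix.diagonal (fun i => ((d i)⁻¹).val) := by
    have hfi : (fun i => (d i).val * ((d i)⁻¹).val) = fun _ => (1 : E) :=
      funext fun i => Units.mul_inv _
    have h1 : A.val * Matrix.diagonal (fun i => ((d i)⁻¹).val) = 1 := by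
      rw [hAval, Matrix.diagonal_mul_diagonal, hfi, Matrix.diagonal_one]
    calc (A⁻¹).val
        = (A⁻¹).val * (A.val * Matrix.diagonal (fun i => ((d i)⁻¹).val)) := by rw [h1, mul_one]
      _ = ((A⁻¹).val * A.val) * Matrix.diagonal (fun i => ((d i)⁻¹).val) := by rw [mul_assoc]
      _ = Matrix.diagonal (fun i => ((d i)⁻¹).val) := by rw [A.inv_mul, one_mul]
  -- the distinguished unit and the degree-0 correction factors
  set u : Eˣ := d i₀ with hu
  have humem : u.val ∈ 𝒜 lam := by rw [hu, hdval]; exact hmem i₀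
  have huinv : (↑u⁻¹ : E) ∈ 𝒜 (-lam) := by
    obtain ⟨z, hzmem, hzy, hyz⟩ := aux_graded_inv0 𝒜 humem u.isUnit
    have h3 : z = ↑u⁻¹ := by
      calc z = z * (↑u * ↑u⁻¹) := by rw [Units.mul_inv, mul_one]
        _ = (z * ↑u) * ↑u⁻¹ := by rw [mul_assoc]
        _ = ↑u⁻¹ := by rw [hzy, one_mul]
    rwa [h3] at hzmem
  refine ⟨u, fun i => d i * u⁻¹, humem, ?_, ?_, ?_⟩
  · intro i
    have : (d i).val * (↑u⁻¹ : E) ∈ 𝒜 (lam + -lam) :=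
      SetLike.mul_mem_graded (by rw [hdval]; exact hmem i) huinv
    rwa [add_neg_cancel] at this
  · have : (fun i => (d i * u⁻¹ * u).val) = fun i => (d i).val := by
      funext i; rw [inv_mul_cancel_right]
    rw [hAval, this]
  · have : (fun i => ((d i * u⁻¹ * u)⁻¹).val) = fun i => ((d i)⁻¹).val := by
      funext i; rw [inv_mul_cancel_right]
    rw [hAinv, this]

/-- let `Γ` be a torsion-free abelian group, `E` a `Γ`-graded
division ring with `E₀ ⊆ Z(E)`, `n > 1`, and `δ ∈ Γ` whose coset `δ + Γ_E` has order
`> 3n` (possibly infinite) in `Γ/Γ_E`.  Let `S = Mₙ(E)(δ̄)` with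
`δ̄ = (0, δ, 2δ, …, (n-1)δ)`.  Then
`[S_h*, S_h*] = {c·𝕀ₙ : c ∈ [E_h*, E_h*]}`. -/
theorem commutator_subgroup_of_shifted_matrix_units {Γ E : Type*} [AddCommGroup Γ]
    [DecidableEq Γ] [Ring E] [Nontrivial E] (𝒜 : Γ → AddSubgroup E) [GradedRing 𝒜]
    (hdiv : ∀ (γ : Γ) (x : E), x ∈ 𝒜 γ → x ≠ 0 → IsUnit x)
    -- `Γ` is torsion-free
    (htf : ∀ (γ : Γ) (m : ℕ), m ≠ 0 → m • γ = 0 → γ = 0)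
    -- `E₀` is contained in the center of `E`
    (hE0c : ∀ x : E, x ∈ 𝒜 (0 : Γ) → x ∈ Set.center E)
    {n : ℕ} (hn : 1 < n) (δ : Γ)
    -- the order of `δ + Γ_E` in `Γ/Γ_E` exceeds `3n` (possibly infinite)
    (horder : ∀ m : ℕ, 1 ≤ m → m ≤ 3 * n → ¬ ∃ x : E, x ≠ 0 ∧ x ∈ 𝒜 (m • δ))
    -- `E_h*`, the group of homogeneous units of `E`
    (Eh : Subgroup Eˣ) (hEh : ∀ u : Eˣ, u ∈ Eh ↔ ∃ γ : Γ, u.val ∈ 𝒜 γ)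
    -- `S_h*`, the group of homogeneous units of `S = Mₙ(E)(0, δ, …, (n-1)δ)`
    (Sh : Subgroup (Matrix (Fin n) (Fin n) E)ˣ)
    (hSh : ∀ A : (Matrix (Fin n) (Fin n) E)ˣ,
      A ∈ Sh ↔ ∃ lam, A.val ∈ MatrixGrade 𝒜 (fun i : Fin n => (i : ℕ) • δ) lam) :
    ∀ A : (Matrix (Fin n) (Fin n) E)ˣ,
      A ∈ ⁅Sh, Sh⁆ ↔
      ∃ c : Eˣ, c ∈ ⁅Eh, Eh⁆ ∧
        A.val = c.val • (1 : Matrix (Fin n) (Fin n) E) := by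
  classical
  -- the scalar-matrix embedding of units
  set φ : Eˣ →* (Matrix (Fin n) (Fin n) E)ˣ :=
    Units.map (Matrix.scalar (Fin n) : E →+* Matrix (Fin n) (Fin n) E).toMonoidHom with hφ
  have hφval : ∀ c : Eˣ, (φ c).val = c.val • (1 : Matrix (Fin n) (Fin n) E) := by
    intro c
    have h1 : (φ c).val = Matrix.diagonal (fun _ : Fin n => c.val) := rfl
    rw [h1]
    ext i j
    by_cases h : i = j
    · subst h
      simp [Matrix.diagonal_apply_eq, Matrix.smul_apply, Matrix.one_apply_eq]
    · simp [Matrix.diagonal_apply_ne _ h, Matrix.smul_apply, Matrix.one_apply_ne h]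
  -- no nonzero homogeneous element of degree `m • δ` for small nonzero `m : ℤ`
  have hzero : ∀ m : ℤ, m ≠ 0 → m.natAbs ≤ 3 * n → ∀ x : E, x ∈ 𝒜 (m • δ) → x = 0 := by
    have hpos : ∀ m : ℤ, 0 < m → m.natAbs ≤ 3 * n → ∀ x : E, x ∈ 𝒜 (m • δ) → x = 0 := by
      intro m hm hle x hx
      by_contra hx0
      refine horder m.natAbs (by omega) hle ⟨x, hx0, ?_⟩
      rwa [show (m.natAbs • δ : Γ) = m • δ by
        rw [← natCast_zsmul, Int.natAbs_of_nonneg hm.le]]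
    intro m hm hle x hx
    rcases lt_or_gt_of_ne hm with hneg | hposm
    · by_contra hx0
      obtain ⟨z, hzmem, hzy, hyz⟩ := aux_graded_inv0 𝒜 hx (hdiv _ _ hx hx0)
      have hz0 : z ≠ 0 := fun h => by rw [h, zero_mul] at hzy; exact zero_ne_one hzy
      refine hz0 (hpos (-m) (by omega) (by omega) z ?_)
      rwa [neg_zsmul]
    · exact hpos m hposm hle x hx
  -- scalar matrices over homogeneous units are homogeneous units
  have hmap : Subgroup.map φ Eh ≤ Sh := by
    rintro B hB
    obtain ⟨c, hc, rfl⟩ := Subgroup.mem_map.mp hB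
    rw [hSh]
    obtain ⟨γ, hγ⟩ := (hEh c).mp hc
    refine ⟨γ, ?_⟩
    intro i j
    have h1 : (φ c).val = Matrix.diagonal (fun _ : Fin n => c.val) := rfl
    rw [h1]
    by_cases h : i = j
    · subst h
      rw [Matrix.diagonal_apply_eq, add_sub_cancel_right]
      exact hγ
    · rw [Matrix.diagonal_apply_ne _ h]
      exact zero_mem _
  -- each commutator of homogeneous matrix units is a scalar commutator
  have hcomm : ∀ P ∈ Sh, ∀ Q ∈ Sh, ⁅P, Q⁆ ∈ Subgroup.map φ ⁅Eh, Eh⁆ := by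
    intro P hP Q hQ
    obtain ⟨lamP, hPA⟩ := (hSh P).mp hP
    obtain ⟨lamQ, hQA⟩ := (hSh Q).mp hQ
    obtain ⟨u, ζ, humem, hζmem, hPval, hPinv⟩ :=
      aux_struct 𝒜 hdiv (by omega) δ (fun m hm hle => hzero m hm (by omega)) P lamP hPA
    obtain ⟨v, ω, hvmem, hωmem, hQval, hQinv⟩ :=
      aux_struct 𝒜 hdiv (by omega) δ (fun m hm hle => hzero m hm (by omega)) Q lamQ hQA
    have hζc : ∀ i (x : Eˣ), (ζ i) * x = x * (ζ i) := by
      intro i x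
      apply Units.ext
      simp only [Units.val_mul]
      exact (Set.mem_center_iff.mp (hE0c _ (hζmem i))).comm x.val
    have hωc : ∀ i (x : Eˣ), (ω i) * x = x * (ω i) := by
      intro i x
      apply Units.ext
      simp only [Units.val_mul]
      exact (Set.mem_center_iff.mp (hE0c _ (hωmem i))).comm x.val
    have hval : ⁅P, Q⁆.val = Matrix.diagonal (fun _ : Fin n => (⁅u, v⁆ : Eˣ).val) := by
      have h1 : ⁅P, Q⁆.val = P.val * Q.val * (P⁻¹).val * (Q⁻¹).val := rfl
      rw [h1, hPval, hQval, hPinv, hQinv, Matrix.diagonal_mul_diagonal,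
        Matrix.diagonal_mul_diagonal, Matrix.diagonal_mul_diagonal]
      have hfun : (fun i : Fin n =>
          (ζ i * u).val * (ω i * v).val * ((ζ i * u)⁻¹).val * ((ω i * v)⁻¹).val)
          = fun _ : Fin n => (⁅u, v⁆ : Eˣ).val := by
        funext i
        rw [← Units.val_mul, ← Units.val_mul, ← Units.val_mul]
        congr 1
        rw [← commutatorElement_def]
        exact aux_comm_erase _ _ _ _ (hζc i) (hωc i)
      rw [hfun]
    have huEh : u ∈ Eh := (hEh u).mpr ⟨lamP, humem⟩
    have hvEh : v ∈ Eh := (hEh v).mpr ⟨lamQ, hvmem⟩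
    refine Subgroup.mem_map.mpr
      ⟨⁅u, v⁆, Subgroup.commutator_mem_commutator huEh hvEh, ?_⟩
    apply Units.ext
    rw [hval]
    rfl
  intro A
  constructor
  · intro hA
    have hle : ⁅Sh, Sh⁆ ≤ Subgroup.map φ ⁅Eh, Eh⁆ := Subgroup.commutator_le.mpr hcomm
    obtain ⟨c, hc, hcA⟩ := Subgroup.mem_map.mp (hle hA)
    exact ⟨c, hc, by rw [← hcA, hφval c]⟩
  · rintro ⟨c, hc, hval⟩
    have hA : A = φ c := Units.ext (by rw [hval, hφval])
    rw [hA]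
    have h2 : Subgroup.map φ ⁅Eh, Eh⁆ ≤ ⁅Sh, Sh⁆ := by
      rw [Subgroup.map_commutator]
      exact Subgroup.commutator_mono hmap hmap
    exact h2 ⟨c, hc, rfl⟩
end
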